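/- arXiv:1605.03524 — 7 statements merged into one kernel-verified Lean document; each statement's English description precedes it below -/
import Mathlib

section
/- For every integer n ≥ 1, the total number of antichains in the doubled root poset of type A_n equals the central binomial coefficient C(2n, n). -/
/-- An element of the doubled root poset of type Aₙ: a triple `(i, j, b)` where `[i,j]`
(with `1 ≤ i ≤ j ≤ n`) is a positive root of type Aₙ (an interval), and `b` records whether
the element lies in the top copy (`true`) or the bottom copy (`false`) of the root poset.
Simple roots (`i = j`) are glued, and by convention carry `b = true`. -/
def DRootA (n : ℕ) : Type :=
  {x : ℕ × ℕ × Bool // 1 ≤ x.1 ∧ x.1 ≤ x.2.1 ∧ x.2.1 ≤ n ∧ (x.1 = x.2.1 → x.2.2 = true)}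

/-- The order relation on the doubled root poset of type Aₙ.  Top elements are ordered as in
the root poset (inclusion of intervals), bottom elements are ordered dually, and a bottom
element lies below a top element exactly when some simple root lies below both in the root
poset (for a top element that is simple this is the same as saying that the simple root lies
below the bottom element in the root poset). -/
def dleA (n : ℕ) (x y : DRootA n) : Prop :=
  (x.1.2.2 = true ∧ y.1.2.2 = true ∧ y.1.1 ≤ x.1.1 ∧ x.1.2.1 ≤ y.1.2.1) ∨
  (x.1.2.2 = false ∧ y.1.2.2 = false ∧ x.1.1 ≤ y.1.1 ∧ y.1.2.1 ≤ x.1.2.1) ∨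
  (x.1.2.2 = false ∧ y.1.2.2 = true ∧
    ∃ m : ℕ, 1 ≤ m ∧ m ≤ n ∧ x.1.1 ≤ m ∧ m ≤ x.1.2.1 ∧ y.1.1 ≤ m ∧ m ≤ y.1.2.1)

instance (n : ℕ) : DecidableEq (DRootA n) :=
  fun a b => decidable_of_iff (a.1 = b.1) Subtype.ext_iff.symm

/-- The "opener" coordinate of an element of the doubled root poset. -/
def xcD {n : ℕ} (a : DRootA n) : ℕ := if a.1.2.2 = true then a.1.1 else a.1.2.1

/-- The "closer" coordinate of an element of the doubled root poset. -/
def ycD {n : ℕ} (a : DRootA n) : ℕ := if a.1.2.2 = true then a.1.2.1 else a.1.1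

lemma xcD_cases {n : ℕ} (a : DRootA n) : xcD a = a.1.1 ∨ xcD a = a.1.2.1 := by
  rw [xcD]; split
  · exact Or.inl rfl
  · exact Or.inr rfl

lemma ycD_cases {n : ℕ} (a : DRootA n) : ycD a = a.1.1 ∨ ycD a = a.1.2.1 := by
  rw [ycD]; split
  · exact Or.inr rfl
  · exact Or.inl rfl

lemma xcD_mem {n : ℕ} (a : DRootA n) : xcD a ∈ Finset.Icc 1 n := by
  obtain ⟨h1, h2, h3, h4⟩ := a.2
  rw [Finset.mem_Icc]
  rcases xcD_cases a with h | h <;> rw [h] <;> omega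

lemma ycD_mem {n : ℕ} (a : DRootA n) : ycD a ∈ Finset.Icc 1 n := by
  obtain ⟨h1, h2, h3, h4⟩ := a.2
  rw [Finset.mem_Icc]
  rcases ycD_cases a with h | h <;> rw [h] <;> omega

lemma inter_iff {n i j i' j' : ℕ} (h1 : 1 ≤ i) (h2 : j ≤ n) (h3 : i ≤ j) (h4 : i' ≤ j') :
    (∃ m : ℕ, 1 ≤ m ∧ m ≤ n ∧ i ≤ m ∧ m ≤ j ∧ i' ≤ m ∧ m ≤ j') ↔ (i ≤ j' ∧ i' ≤ j) := by
  constructor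
  · rintro ⟨m, hm⟩; omega
  · rintro ⟨u, v⟩; exact ⟨max i i', by omega⟩

/-- characterization of incomparability in the doubled root poset -/
lemma incomp_iff {n : ℕ} (a b : DRootA n) (hab : a ≠ b) :
    (¬ dleA n a b ∧ ¬ dleA n b a) ↔
      ((xcD a < xcD b ∧ ycD a < ycD b) ∨ (xcD b < xcD a ∧ ycD b < ycD a)) := by
  obtain ⟨ha1, ha2, ha3, ha4⟩ := a.2
  obtain ⟨hb1, hb2, hb3, hb4⟩ := b.2
  have hne : a.1.2.2 = b.1.2.2 → ¬(a.1.1 = b.1.1 ∧ a.1.2.1 = b.1.2.1) := by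
    rintro hB ⟨hI, hJ⟩
    exact hab (Subtype.ext (Prod.ext hI (Prod.ext hJ hB)))
  cases hba : a.1.2.2 <;> cases hbb : b.1.2.2
  · -- both bottom
    have hne' := hne (by rw [hba, hbb])
    simp only [dleA, xcD, ycD, hba, hbb]
    simp
    omega
  · -- a bottom, b top
    have hsa : a.1.1 ≠ a.1.2.1 := fun h => by rw [ha4 h] at hba; cases hba
    simp only [dleA, xcD, ycD, hba, hbb]
    simp [inter_iff ha1 ha3 ha2 hb2]
    omega
  · -- a top, b bottom
    have hsb : b.1.1 ≠ b.1.2.1 := fun h => by rw [hb4 h] at hbb; cases hbb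
    simp only [dleA, xcD, ycD, hba, hbb]
    simp [inter_iff hb1 hb3 hb2 ha2]
    omega
  · -- both top
    have hne' := hne (by rw [hba, hbb])
    simp only [dleA, xcD, ycD, hba, hbb]
    simp
    omega

lemma antichain_iff {n : ℕ} (A : Finset (DRootA n)) :
    IsAntichain (dleA n) (A : Set (DRootA n)) ↔
      ∀ a ∈ A, ∀ b ∈ A, a ≠ b →
        ((xcD a < xcD b ∧ ycD a < ycD b) ∨ (xcD b < xcD a ∧ ycD b < ycD a)) := by
  constructor
  · intro h a ha b hb hab
    exact (incomp_iff a b hab).1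
      ⟨h (Finset.mem_coe.2 ha) (Finset.mem_coe.2 hb) hab,
       h (Finset.mem_coe.2 hb) (Finset.mem_coe.2 ha) hab.symm⟩
  · intro h a ha b hb hab
    exact ((incomp_iff a b hab).2 (h a (Finset.mem_coe.1 ha) b (Finset.mem_coe.1 hb) hab)).1

/-- the underlying triple of the element built from an opener-closer pair -/
def arcPair (x y : ℕ) : ℕ × ℕ × Bool := if x ≤ y then (x, y, true) else (y, x, false)

lemma arcPair_prop {n x y : ℕ} (hx : x ∈ Finset.Icc 1 n) (hy : y ∈ Finset.Icc 1 n) :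
    1 ≤ (arcPair x y).1 ∧ (arcPair x y).1 ≤ (arcPair x y).2.1 ∧ (arcPair x y).2.1 ≤ n ∧
      ((arcPair x y).1 = (arcPair x y).2.1 → (arcPair x y).2.2 = true) := by
  rw [Finset.mem_Icc] at hx hy
  rw [arcPair]
  split
  · exact ⟨hx.1, by assumption, hy.2, fun _ => rfl⟩
  · next h =>
    refine ⟨hy.1, ?_, hx.2, fun hh => absurd (show y = x from hh) (by omega)⟩
    show y ≤ x
    omega

/-- build an element of the doubled root poset from an opener-closer pair -/
def mkArc (n x y : ℕ) (hx : x ∈ Finset.Icc 1 n) (hy : y ∈ Finset.Icc 1 n) : DRootA n :=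
  ⟨arcPair x y, arcPair_prop hx hy⟩

lemma mkArc_val {n x y : ℕ} (hx : x ∈ Finset.Icc 1 n) (hy : y ∈ Finset.Icc 1 n) :
    (mkArc n x y hx hy).1 = arcPair x y := rfl

lemma xcD_mkArc {n x y : ℕ} (hx : x ∈ Finset.Icc 1 n) (hy : y ∈ Finset.Icc 1 n) :
    xcD (mkArc n x y hx hy) = x := by
  rw [xcD, mkArc_val, arcPair]
  split <;> simp

lemma ycD_mkArc {n x y : ℕ} (hx : x ∈ Finset.Icc 1 n) (hy : y ∈ Finset.Icc 1 n) :
    ycD (mkArc n x y hx hy) = y := by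
  rw [ycD, mkArc_val, arcPair]
  split <;> simp

lemma arcPair_xcD_ycD {n : ℕ} (a : DRootA n) : arcPair (xcD a) (ycD a) = a.1 := by
  obtain ⟨ha1, ha2, ha3, ha4⟩ := a.2
  cases hba : a.1.2.2
  · have hsa : a.1.1 ≠ a.1.2.1 := fun h => by rw [ha4 h] at hba; cases hba
    rw [arcPair, xcD, ycD]
    simp only [hba, Bool.false_eq_true, if_false]
    rw [if_neg (by omega)]
    exact Prod.ext rfl (Prod.ext rfl hba.symm)
  · rw [arcPair, xcD, ycD]
    simp only [hba, if_true]
    rw [if_pos ha2]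
    exact Prod.ext rfl (Prod.ext rfl hba.symm)

/-- pairs of equal-size subsets of `[1, n]` -/
abbrev PairsA (n : ℕ) :=
  {p : Finset ℕ × Finset ℕ //
    p.1 ⊆ Finset.Icc 1 n ∧ p.2 ⊆ Finset.Icc 1 n ∧ p.2.card = p.1.card}

/-- the antichain associated to a pair of equal-size subsets -/
def psiA (n : ℕ) (p : PairsA n) : Finset (DRootA n) :=
  Finset.image
    (fun t : Fin p.1.1.card =>
      mkArc n (p.1.1.orderEmbOfFin rfl t) (p.1.2.orderEmbOfFin p.2.2.2 t)
        (p.2.1 (Finset.orderEmbOfFin_mem _ _ _))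
        (p.2.2.1 (Finset.orderEmbOfFin_mem _ _ _)))
    Finset.univ

lemma image_orderEmbOfFin {s : Finset ℕ} {k : ℕ} (h : s.card = k) :
    Finset.image (fun t => s.orderEmbOfFin h t) Finset.univ = s := by
  apply Finset.eq_of_subset_of_card_le
  · intro x hx
    obtain ⟨t, _, rfl⟩ := Finset.mem_image.1 hx
    exact Finset.orderEmbOfFin_mem s h t
  · rw [Finset.card_image_of_injective _ (s.orderEmbOfFin h).injective, Finset.card_univ,
      Fintype.card_fin, h]

lemma psiA_antichain (n : ℕ) (p : PairsA n) :
    IsAntichain (dleA n) ((psiA n p : Finset (DRootA n)) : Set (DRootA n)) := by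
  apply (antichain_iff _).2
  intro a ha b hb hab
  obtain ⟨s, _, rfl⟩ := Finset.mem_image.1 ha
  obtain ⟨t, _, rfl⟩ := Finset.mem_image.1 hb
  have hst : s ≠ t := fun h => hab (by rw [h])
  rw [xcD_mkArc, xcD_mkArc, ycD_mkArc, ycD_mkArc]
  rcases hst.lt_or_gt with h | h
  · exact Or.inl ⟨(Finset.orderEmbOfFin _ _).strictMono h,
      (Finset.orderEmbOfFin _ _).strictMono h⟩
  · exact Or.inr ⟨(Finset.orderEmbOfFin _ _).strictMono h,
      (Finset.orderEmbOfFin _ _).strictMono h⟩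

lemma psiA_card (n : ℕ) (p : PairsA n) : (psiA n p).card = p.1.1.card := by
  have hinj : Function.Injective
      (fun t : Fin p.1.1.card =>
        mkArc n (p.1.1.orderEmbOfFin rfl t) (p.1.2.orderEmbOfFin p.2.2.2 t)
          (p.2.1 (Finset.orderEmbOfFin_mem _ _ _))
          (p.2.2.1 (Finset.orderEmbOfFin_mem _ _ _))) := by
    intro s t h
    have h2 : xcD (mkArc n (p.1.1.orderEmbOfFin rfl s) (p.1.2.orderEmbOfFin p.2.2.2 s)
          (p.2.1 (Finset.orderEmbOfFin_mem _ _ _))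
          (p.2.2.1 (Finset.orderEmbOfFin_mem _ _ _))) =
        xcD (mkArc n (p.1.1.orderEmbOfFin rfl t) (p.1.2.orderEmbOfFin p.2.2.2 t)
          (p.2.1 (Finset.orderEmbOfFin_mem _ _ _))
          (p.2.2.1 (Finset.orderEmbOfFin_mem _ _ _))) := congrArg xcD h
    rw [xcD_mkArc, xcD_mkArc] at h2
    exact (p.1.1.orderEmbOfFin rfl).injective h2
  rw [psiA, Finset.card_image_of_injective _ hinj, Finset.card_univ, Fintype.card_fin]

lemma xcD_image_psiA (n : ℕ) (p : PairsA n) : (psiA n p).image xcD = p.1.1 := by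
  rw [psiA, Finset.image_image]
  have heq : (xcD ∘ fun t : Fin p.1.1.card =>
      mkArc n (p.1.1.orderEmbOfFin rfl t) (p.1.2.orderEmbOfFin p.2.2.2 t)
        (p.2.1 (Finset.orderEmbOfFin_mem _ _ _))
        (p.2.2.1 (Finset.orderEmbOfFin_mem _ _ _))) =
      fun t => p.1.1.orderEmbOfFin rfl t := by
    funext t
    exact xcD_mkArc _ _
  rw [heq, image_orderEmbOfFin]

lemma ycD_image_psiA (n : ℕ) (p : PairsA n) : (psiA n p).image ycD = p.1.2 := by
  rw [psiA, Finset.image_image]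
  have heq : (ycD ∘ fun t : Fin p.1.1.card =>
      mkArc n (p.1.1.orderEmbOfFin rfl t) (p.1.2.orderEmbOfFin p.2.2.2 t)
        (p.2.1 (Finset.orderEmbOfFin_mem _ _ _))
        (p.2.2.1 (Finset.orderEmbOfFin_mem _ _ _))) =
      fun t => p.1.2.orderEmbOfFin p.2.2.2 t := by
    funext t
    exact ycD_mkArc _ _
  rw [heq, image_orderEmbOfFin]

lemma psiA_inj (n : ℕ) : Function.Injective (psiA n) := by
  intro p q h
  apply Subtype.ext
  apply Prod.ext
  · rw [← xcD_image_psiA n p, ← xcD_image_psiA n q, h]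
  · rw [← ycD_image_psiA n p, ← ycD_image_psiA n q, h]

lemma psiA_surj (n : ℕ) (A : Finset (DRootA n))
    (hA : IsAntichain (dleA n) (A : Set (DRootA n))) : ∃ p : PairsA n, psiA n p = A := by
  have hcons := (antichain_iff A).1 hA
  have hxinj : ∀ a ∈ A, ∀ b ∈ A, xcD a = xcD b → a = b := by
    intro a ha b hb hxy
    by_contra hne
    rcases hcons a ha b hb hne with h | h <;> omega
  have hyinj : ∀ a ∈ A, ∀ b ∈ A, ycD a = ycD b → a = b := by
    intro a ha b hb hxy
    by_contra hne
    rcases hcons a ha b hb hne with h | h <;> omega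
  have hXc : (A.image xcD).card = A.card :=
    Finset.card_image_of_injOn (fun a ha b hb h => hxinj a ha b hb h)
  have hYc : (A.image ycD).card = A.card :=
    Finset.card_image_of_injOn (fun a ha b hb h => hyinj a ha b hb h)
  have hXsub : A.image xcD ⊆ Finset.Icc 1 n := by
    intro x hx; obtain ⟨a, _, rfl⟩ := Finset.mem_image.1 hx; exact xcD_mem a
  have hYsub : A.image ycD ⊆ Finset.Icc 1 n := by
    intro x hx; obtain ⟨a, _, rfl⟩ := Finset.mem_image.1 hx; exact ycD_mem a
  have hYk : (A.image ycD).card = (A.image xcD).card := by rw [hXc, hYc]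
  -- choose preimages of the order embedding of X
  have hex : ∀ t : Fin (A.image xcD).card,
      ∃ a, a ∈ A ∧ xcD a = (A.image xcD).orderEmbOfFin rfl t := by
    intro t
    have hmem : (A.image xcD).orderEmbOfFin rfl t ∈ A.image xcD :=
      Finset.orderEmbOfFin_mem _ rfl t
    obtain ⟨a, ha, hxa⟩ := Finset.mem_image.1 hmem
    exact ⟨a, ha, hxa⟩
  choose g hgA hgx using hex
  have hgmono : StrictMono fun t => xcD (g t) := by
    intro s t hst
    show xcD (g s) < xcD (g t)
    rw [hgx, hgx]
    exact ((A.image xcD).orderEmbOfFin rfl).strictMono hst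
  have hginj : Function.Injective g := fun s t h =>
    hgmono.injective (show xcD (g s) = xcD (g t) from congrArg xcD h)
  have hymono : StrictMono fun t => ycD (g t) := by
    intro s t hst
    show ycD (g s) < ycD (g t)
    have hxlt : xcD (g s) < xcD (g t) := hgmono hst
    have hne : g s ≠ g t := fun h => absurd (hginj h) hst.ne
    rcases hcons (g s) (hgA s) (g t) (hgA t) hne with h | h
    · exact h.2
    · omega
  have hyval : ∀ t, ycD (g t) = (A.image ycD).orderEmbOfFin hYk t := by
    have heq := Finset.orderEmbOfFin_unique hYk
      (f := fun t => ycD (g t))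
      (fun t => Finset.mem_image_of_mem ycD (hgA t)) hymono
    intro t
    exact congrFun heq t
  refine ⟨⟨(A.image xcD, A.image ycD), hXsub, hYsub, hYk⟩, ?_⟩
  apply Finset.eq_of_subset_of_card_le
  · intro a ha
    obtain ⟨t, _, rfl⟩ := Finset.mem_image.1 ha
    convert hgA t using 1
    apply Subtype.ext
    show arcPair ((A.image xcD).orderEmbOfFin rfl t) ((A.image ycD).orderEmbOfFin hYk t)
        = (g t).1
    rw [← hgx t, ← hyval t]
    exact arcPair_xcD_ycD (g t)
  · rw [psiA_card]
    show A.card ≤ (A.image xcD).card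
    omega
  
lemma card_pairsA (n : ℕ) : Nat.card (PairsA n) = (2 * n).choose n := by
  classical
  have hGcard : (Finset.Icc 1 n).card = n := by rw [Nat.card_Icc]; omega
  set P : Finset (Finset ℕ × Finset ℕ) :=
    ((Finset.Icc 1 n).powerset ×ˢ (Finset.Icc 1 n).powerset).filter
      (fun p => p.2.card = p.1.card) with hP
  have e : PairsA n ≃ {p // p ∈ P} := Equiv.subtypeEquivRight (by
    intro p
    rw [hP]
    simp only [Finset.mem_filter, Finset.mem_product, Finset.mem_powerset]
    tauto)
  rw [Nat.card_congr e, Nat.card_eq_finsetCard]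
  have hPU : P = (Finset.range (n + 1)).biUnion
      (fun k => Finset.powersetCard k (Finset.Icc 1 n) ×ˢ
        Finset.powersetCard k (Finset.Icc 1 n)) := by
    ext p
    simp only [hP, Finset.mem_filter, Finset.mem_product, Finset.mem_powerset,
      Finset.mem_biUnion, Finset.mem_range, Finset.mem_powersetCard]
    constructor
    · rintro ⟨⟨h1, h2⟩, h3⟩
      refine ⟨p.1.card, ?_, ⟨h1, rfl⟩, ⟨h2, h3⟩⟩
      have := Finset.card_le_card h1
      omega
    · rintro ⟨k, hk, ⟨h1, hc1⟩, ⟨h2, hc2⟩⟩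
      exact ⟨⟨h1, h2⟩, by omega⟩
  rw [hPU, Finset.card_biUnion]
  · have hsum : ∀ k ∈ Finset.range (n + 1),
        (Finset.powersetCard k (Finset.Icc 1 n) ×ˢ
          Finset.powersetCard k (Finset.Icc 1 n)).card = n.choose k * n.choose k := by
      intro k _
      rw [Finset.card_product, Finset.card_powersetCard, hGcard]
    rw [Finset.sum_congr rfl hsum, two_mul, Nat.add_choose_eq,
      Finset.Nat.sum_antidiagonal_eq_sum_range_succ_mk]
    apply Finset.sum_congr rfl
    intro k hk
    rw [Nat.choose_symm (Nat.lt_succ_iff.1 (Finset.mem_range.1 hk))]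
  · intro k _ l _ hkl
    rw [Function.onFun, Finset.disjoint_left]
    intro p hp hq
    rw [Finset.mem_product, Finset.mem_powersetCard] at hp hq
    exact hkl (hp.1.2 ▸ hq.1.2)

/-- The number of antichains in the doubled root poset of type Aₙ is the central binomial
coefficient `C(2n, n)`. -/
theorem doubledRootPosetA_antichain_count (n : ℕ) (hn : 1 ≤ n) :
    Nat.card {A : Finset (DRootA n) // IsAntichain (dleA n) (A : Set (DRootA n))} =
      Nat.choose (2 * n) n := by
  have hbij : Function.Bijective
      (fun p : PairsA n =>
        (⟨psiA n p, psiA_antichain n p⟩ :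
          {A : Finset (DRootA n) // IsAntichain (dleA n) (A : Set (DRootA n))})) := by
    constructor
    · intro p q h
      exact psiA_inj n (congrArg Subtype.val h)
    · rintro ⟨A, hA⟩
      obtain ⟨p, hp⟩ := psiA_surj n A hA
      exact ⟨p, Subtype.ext hp⟩
  rw [← Nat.card_congr (Equiv.ofBijective _ hbij)]
  exact card_pairsA n
end

section
/- For every integer n ≥ 1 and every 0 ≤ k ≤ n, the number of k-element antichains in the doubled root poset of type A_n equals C(n, k)². -/
namespace DPaux

def fA {n : ℕ} (x : DRootA n) : ℕ := if x.1.2.2 then x.1.1 else x.1.2.1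
def gA {n : ℕ} (x : DRootA n) : ℕ := if x.1.2.2 then x.1.2.1 else x.1.1

def rec0 (l r : ℕ) : ℕ × ℕ × Bool := if l ≤ r then (l, r, true) else (r, l, false)

lemma rec0_prop {n l r : ℕ} (h1 : 1 ≤ l) (h2 : l ≤ n) (h3 : 1 ≤ r) (h4 : r ≤ n) :
    1 ≤ (rec0 l r).1 ∧ (rec0 l r).1 ≤ (rec0 l r).2.1 ∧ (rec0 l r).2.1 ≤ n ∧
      ((rec0 l r).1 = (rec0 l r).2.1 → (rec0 l r).2.2 = true) := by
  unfold rec0; split <;> simp <;> omega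

def recD {n : ℕ} (l r : ℕ) (h : 1 ≤ l ∧ l ≤ n ∧ 1 ≤ r ∧ r ≤ n) : DRootA n :=
  ⟨rec0 l r, rec0_prop h.1 h.2.1 h.2.2.1 h.2.2.2⟩

lemma fA_recD {n l r : ℕ} (h : 1 ≤ l ∧ l ≤ n ∧ 1 ≤ r ∧ r ≤ n) :
    fA (recD (n := n) l r h) = l := by
  unfold fA recD rec0; split <;> simp

lemma gA_recD {n l r : ℕ} (h : 1 ≤ l ∧ l ≤ n ∧ 1 ≤ r ∧ r ≤ n) :
    gA (recD (n := n) l r h) = r := by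
  unfold gA recD rec0; split <;> simp

lemma rec0_fg {n : ℕ} (x : DRootA n) : rec0 (fA x) (gA x) = x.1 := by
  obtain ⟨⟨i, j, b⟩, h1, h2, h3, h4⟩ := x
  simp only [fA, gA, rec0] at *
  cases b <;> simp_all <;> omega

lemma fA_bounds {n : ℕ} (x : DRootA n) :
    1 ≤ fA x ∧ fA x ≤ n ∧ 1 ≤ gA x ∧ gA x ≤ n := by
  obtain ⟨⟨i, j, b⟩, h1, h2, h3, h4⟩ := x
  simp only [fA, gA] at *
  cases b <;> simp_all <;> omega

lemma consistent {n : ℕ} {x y : DRootA n} (hxy : ¬ dleA n x y) (hyx : ¬ dleA n y x) :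
    (fA x < fA y ↔ gA x < gA y) ∧ fA x ≠ fA y ∧ gA x ≠ gA y := by
  obtain ⟨⟨i, j, b⟩, h1, h2, h3, h4⟩ := x
  obtain ⟨⟨i', j', b'⟩, h1', h2', h3', h4'⟩ := y
  simp only [fA, gA, dleA] at *
  cases b <;> cases b' <;> simp_all
  · omega
  · -- x bottom, y top
    have h5 := hxy (max i i')
    omega
  · -- x top, y bottom
    have h5 := hyx (max i i')
    omega
  · omega


instance (n : ℕ) : DecidableEq (DRootA n) := by
  unfold DRootA; infer_instance

variable {n k : ℕ}

lemma mem_bounds {L : Finset ℕ} (hL : L ⊆ Finset.Icc 1 n) {x : ℕ} (hx : x ∈ L) :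
    1 ≤ x ∧ x ≤ n := by
  have := hL hx; rw [Finset.mem_Icc] at this; exact this

/-- The backward map: from a pair of `k`-subsets of `[1,n]` to a `k`-subset of `DRootA n`. -/
noncomputable def bwd (n k : ℕ) (L R : Finset ℕ)
    (hL : L ⊆ Finset.Icc 1 n) (hLc : L.card = k)
    (hR : R ⊆ Finset.Icc 1 n) (hRc : R.card = k) : Finset (DRootA n) :=
  Finset.image (fun m : Fin k =>
    recD (L.orderEmbOfFin hLc m) (R.orderEmbOfFin hRc m)
      ⟨(mem_bounds hL (L.orderEmbOfFin_mem hLc m)).1,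
       (mem_bounds hL (L.orderEmbOfFin_mem hLc m)).2,
       (mem_bounds hR (R.orderEmbOfFin_mem hRc m)).1,
       (mem_bounds hR (R.orderEmbOfFin_mem hRc m)).2⟩) Finset.univ

lemma e_not_le (l r : Fin k → ℕ) (hl : StrictMono l) (hr : StrictMono r)
    (hb : ∀ m : Fin k, 1 ≤ l m ∧ l m ≤ n ∧ 1 ≤ r m ∧ r m ≤ n)
    {m m' : Fin k} (hmm : m ≠ m') :
    ¬ dleA n (recD (l m) (r m) (hb m)) (recD (l m') (r m') (hb m')) := by
  intro hle
  have hll : l m < l m' ↔ m < m' := hl.lt_iff_lt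
  have hll' : l m' < l m ↔ m' < m := hl.lt_iff_lt
  have hrr : r m < r m' ↔ m < m' := hr.lt_iff_lt
  have hrr' : r m' < r m ↔ m' < m := hr.lt_iff_lt
  have hne : l m ≠ l m' := fun h => hmm (hl.injective h)
  have hmm2 : m < m' ∨ m' < m := hmm.lt_or_gt
  simp only [recD, dleA, rec0] at hle
  rcases le_or_gt (l m) (r m) with c1 | c1 <;> rcases le_or_gt (l m') (r m') with c2 | c2
  · rw [if_pos c1, if_pos c2] at hle
    simp only [Prod.fst, Prod.snd] at hle
    rcases hle with ⟨-, -, h1, h2⟩ | ⟨h, -⟩ | ⟨h, -⟩ <;> simp_all <;> omega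
  · rw [if_pos c1, if_neg (Nat.not_le.mpr c2)] at hle
    rcases hle with ⟨-, h, -⟩ | ⟨h, -⟩ | ⟨h, -⟩ <;> simp_all <;> omega
  · rw [if_neg (Nat.not_le.mpr c1), if_pos c2] at hle
    rcases hle with ⟨h, -⟩ | ⟨-, h, -⟩ | ⟨-, -, x, hx⟩ <;> simp_all <;> omega
  · rw [if_neg (Nat.not_le.mpr c1), if_neg (Nat.not_le.mpr c2)] at hle
    rcases hle with ⟨h, -⟩ | ⟨-, -, h1, h2⟩ | ⟨-, h, -⟩ <;> simp_all <;> omega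

lemma bwd_antichain (L R : Finset ℕ) (hL : L ⊆ Finset.Icc 1 n) (hLc : L.card = k)
    (hR : R ⊆ Finset.Icc 1 n) (hRc : R.card = k) :
    IsAntichain (dleA n) ((bwd n k L R hL hLc hR hRc : Finset (DRootA n)) : Set (DRootA n)) := by
  intro x hx y hy hne
  simp only [bwd, Finset.coe_image, Set.mem_image, Finset.mem_coe, Finset.mem_image,
    Finset.coe_univ, Set.image_univ, Set.mem_range] at hx hy
  obtain ⟨m, rfl⟩ := hx
  obtain ⟨m', rfl⟩ := hy
  have hmm : m ≠ m' := by rintro rfl; exact hne rfl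
  exact e_not_le _ _ (L.orderEmbOfFin hLc).strictMono (R.orderEmbOfFin hRc).strictMono _ hmm

lemma bwd_injective_aux (L R : Finset ℕ) (hL : L ⊆ Finset.Icc 1 n) (hLc : L.card = k)
    (hR : R ⊆ Finset.Icc 1 n) (hRc : R.card = k) :
    Function.Injective (fun m : Fin k =>
      recD (L.orderEmbOfFin hLc m) (R.orderEmbOfFin hRc m)
        ⟨(mem_bounds hL (L.orderEmbOfFin_mem hLc m)).1,
         (mem_bounds hL (L.orderEmbOfFin_mem hLc m)).2,
         (mem_bounds hR (R.orderEmbOfFin_mem hRc m)).1,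
         (mem_bounds hR (R.orderEmbOfFin_mem hRc m)).2⟩) := by
  intro m m' h
  have : fA (recD (L.orderEmbOfFin hLc m) (R.orderEmbOfFin hRc m) _) =
      fA (recD (L.orderEmbOfFin hLc m') (R.orderEmbOfFin hRc m') _) := congrArg fA h
  rw [fA_recD, fA_recD] at this
  exact (L.orderEmbOfFin hLc).injective this

lemma bwd_card (L R : Finset ℕ) (hL : L ⊆ Finset.Icc 1 n) (hLc : L.card = k)
    (hR : R ⊆ Finset.Icc 1 n) (hRc : R.card = k) :
    (bwd n k L R hL hLc hR hRc).card = k := by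
  rw [bwd, Finset.card_image_of_injective _ (bwd_injective_aux L R hL hLc hR hRc)]
  simp

lemma image_orderEmbOfFin (L : Finset ℕ) (hLc : L.card = k) :
    Finset.image (L.orderEmbOfFin hLc) Finset.univ = L := by
  apply Finset.coe_injective
  rw [Finset.coe_image, Finset.coe_univ, Set.image_univ, Finset.range_orderEmbOfFin]

lemma bwd_image_f (L R : Finset ℕ) (hL : L ⊆ Finset.Icc 1 n) (hLc : L.card = k)
    (hR : R ⊆ Finset.Icc 1 n) (hRc : R.card = k) :
    (bwd n k L R hL hLc hR hRc).image fA = L := by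
  rw [bwd, Finset.image_image]
  have : ∀ m : Fin k, (fA ∘ fun m : Fin k =>
      recD (L.orderEmbOfFin hLc m) (R.orderEmbOfFin hRc m)
        ⟨(mem_bounds hL (L.orderEmbOfFin_mem hLc m)).1,
         (mem_bounds hL (L.orderEmbOfFin_mem hLc m)).2,
         (mem_bounds hR (R.orderEmbOfFin_mem hRc m)).1,
         (mem_bounds hR (R.orderEmbOfFin_mem hRc m)).2⟩) m = L.orderEmbOfFin hLc m := by
    intro m; exact fA_recD _
  rw [Finset.image_congr (fun m _ => this m)]
  exact image_orderEmbOfFin L hLc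

lemma bwd_image_g (L R : Finset ℕ) (hL : L ⊆ Finset.Icc 1 n) (hLc : L.card = k)
    (hR : R ⊆ Finset.Icc 1 n) (hRc : R.card = k) :
    (bwd n k L R hL hLc hR hRc).image gA = R := by
  rw [bwd, Finset.image_image]
  have : ∀ m : Fin k, (gA ∘ fun m : Fin k =>
      recD (L.orderEmbOfFin hLc m) (R.orderEmbOfFin hRc m)
        ⟨(mem_bounds hL (L.orderEmbOfFin_mem hLc m)).1,
         (mem_bounds hL (L.orderEmbOfFin_mem hLc m)).2,
         (mem_bounds hR (R.orderEmbOfFin_mem hRc m)).1,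
         (mem_bounds hR (R.orderEmbOfFin_mem hRc m)).2⟩) m = R.orderEmbOfFin hRc m := by
    intro m; exact gA_recD _
  rw [Finset.image_congr (fun m _ => this m)]
  exact image_orderEmbOfFin R hRc


lemma injOn_fA {A : Finset (DRootA n)} (hA : IsAntichain (dleA n) (A : Set (DRootA n))) :
    Set.InjOn fA (A : Set (DRootA n)) := by
  intro x hx y hy h
  by_contra hne
  exact (consistent (hA hx hy hne) (hA hy hx (Ne.symm hne))).2.1 h

lemma injOn_gA {A : Finset (DRootA n)} (hA : IsAntichain (dleA n) (A : Set (DRootA n))) :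
    Set.InjOn gA (A : Set (DRootA n)) := by
  intro x hx y hy h
  by_contra hne
  exact (consistent (hA hx hy hne) (hA hy hx (Ne.symm hne))).2.2 h

lemma bwd_eq {A : Finset (DRootA n)} (hA : IsAntichain (dleA n) (A : Set (DRootA n)))
    (hAc : A.card = k) (hL : A.image fA ⊆ Finset.Icc 1 n) (hLc : (A.image fA).card = k)
    (hR : A.image gA ⊆ Finset.Icc 1 n) (hRc : (A.image gA).card = k) :
    bwd n k (A.image fA) (A.image gA) hL hLc hR hRc = A := by
  classical
  have hnc : ∀ ⦃x : DRootA n⦄, x ∈ A → ∀ ⦃y : DRootA n⦄, y ∈ A → x ≠ y → ¬ dleA n x y :=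
    fun x hx y hy hne => hA hx hy hne
  have hex : ∀ m : Fin k, ∃! a, a ∈ A ∧ fA a = (A.image fA).orderEmbOfFin hLc m := by
    intro m
    have hmem := (A.image fA).orderEmbOfFin_mem hLc m
    rw [Finset.mem_image] at hmem
    obtain ⟨a, ha, hfa⟩ := hmem
    refine ⟨a, ⟨ha, hfa⟩, ?_⟩
    rintro b ⟨hb, hfb⟩
    by_contra hne
    exact (consistent (hnc hb ha hne) (hnc ha hb (Ne.symm hne))).2.1 (hfb.trans hfa.symm)
  set σ : Fin k → DRootA n := fun m => Finset.choose _ A (hex m) with hσdef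
  have hσmem : ∀ m, σ m ∈ A := fun m => Finset.choose_mem _ A (hex m)
  have hσf : ∀ m, fA (σ m) = (A.image fA).orderEmbOfFin hLc m :=
    fun m => Finset.choose_property _ A (hex m)
  have hσinj : Function.Injective σ := by
    intro m m' h
    apply ((A.image fA).orderEmbOfFin hLc).injective
    rw [← hσf, ← hσf, h]
  have hσg : ∀ m, gA (σ m) = (A.image gA).orderEmbOfFin hRc m := by
    have hmono : StrictMono (fun m => gA (σ m)) := by
      intro m m' hlt
      have hne : σ m ≠ σ m' := fun h => (ne_of_lt hlt) (hσinj h)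
      have hf : fA (σ m) < fA (σ m') := by
        rw [hσf, hσf]
        exact ((A.image fA).orderEmbOfFin hLc).strictMono hlt
      exact ((consistent (hnc (hσmem m) (hσmem m') hne)
        (hnc (hσmem m') (hσmem m) hne.symm)).1).mp hf
    have hmem : ∀ m, gA (σ m) ∈ A.image gA := fun m => Finset.mem_image_of_mem _ (hσmem m)
    have h := Finset.orderEmbOfFin_unique hRc hmem hmono
    exact fun m => congrFun h m
  rw [bwd]
  have himg : ∀ m ∈ (Finset.univ : Finset (Fin k)),
      recD ((A.image fA).orderEmbOfFin hLc m) ((A.image gA).orderEmbOfFin hRc m)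
        ⟨(mem_bounds hL ((A.image fA).orderEmbOfFin_mem hLc m)).1,
         (mem_bounds hL ((A.image fA).orderEmbOfFin_mem hLc m)).2,
         (mem_bounds hR ((A.image gA).orderEmbOfFin_mem hRc m)).1,
         (mem_bounds hR ((A.image gA).orderEmbOfFin_mem hRc m)).2⟩ = σ m := by
    intro m _
    apply Subtype.ext
    show rec0 ((A.image fA).orderEmbOfFin hLc m) ((A.image gA).orderEmbOfFin hRc m) = (σ m).1
    rw [← hσf, ← hσg]
    exact rec0_fg (σ m)
  rw [Finset.image_congr himg]
  apply Finset.eq_of_subset_of_card_le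
  · intro a ha
    rw [Finset.mem_image] at ha
    obtain ⟨m, -, rfl⟩ := ha
    exact hσmem m
  · rw [hAc, Finset.card_image_of_injective _ hσinj, Finset.card_univ, Fintype.card_fin]

end DPaux

/-- The number of `k`-element antichains in the doubled root poset of type Aₙ is `C(n, k)²`. -/
theorem doubledRootPosetA_antichain_count_by_size (n k : ℕ) (hn : 1 ≤ n) (hk : k ≤ n) :
    Nat.card {A : Finset (DRootA n) // IsAntichain (dleA n) (A : Set (DRootA n)) ∧ A.card = k} =
      Nat.choose n k ^ 2 := by
  classical
  have hIcc : (Finset.Icc 1 n).card = n := by simp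
  set P : Finset (Finset ℕ × Finset ℕ) :=
    ((Finset.Icc 1 n).powersetCard k) ×ˢ ((Finset.Icc 1 n).powersetCard k) with hP
  have hmem : ∀ p : Finset ℕ × Finset ℕ, p ∈ P → (p.1 ⊆ Finset.Icc 1 n ∧ p.1.card = k) ∧
      (p.2 ⊆ Finset.Icc 1 n ∧ p.2.card = k) := by
    intro p h
    rw [hP, Finset.mem_product, Finset.mem_powersetCard, Finset.mem_powersetCard] at h
    exact h
  have hcongr : Nat.card {A : Finset (DRootA n) //
      IsAntichain (dleA n) (A : Set (DRootA n)) ∧ A.card = k} = Nat.card P := by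
    apply Nat.card_congr
    refine Equiv.symm (Equiv.ofBijective (fun p =>
      ⟨DPaux.bwd n k p.1.1 p.1.2 (hmem p.1 p.2).1.1 (hmem p.1 p.2).1.2 (hmem p.1 p.2).2.1 (hmem p.1 p.2).2.2,
       DPaux.bwd_antichain _ _ _ _ _ _, DPaux.bwd_card _ _ _ _ _ _⟩) ⟨?_, ?_⟩)
    · intro p q h
      have h' : DPaux.bwd n k p.1.1 p.1.2 (hmem p.1 p.2).1.1 (hmem p.1 p.2).1.2 (hmem p.1 p.2).2.1 (hmem p.1 p.2).2.2 =
          DPaux.bwd n k q.1.1 q.1.2 (hmem q.1 q.2).1.1 (hmem q.1 q.2).1.2 (hmem q.1 q.2).2.1 (hmem q.1 q.2).2.2 :=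
        congrArg Subtype.val h
      have h1 : p.1.1 = q.1.1 := by
        rw [← DPaux.bwd_image_f p.1.1 p.1.2 (hmem p.1 p.2).1.1 (hmem p.1 p.2).1.2 (hmem p.1 p.2).2.1 (hmem p.1 p.2).2.2,
            ← DPaux.bwd_image_f q.1.1 q.1.2 (hmem q.1 q.2).1.1 (hmem q.1 q.2).1.2 (hmem q.1 q.2).2.1 (hmem q.1 q.2).2.2, h']
      have h2 : p.1.2 = q.1.2 := by
        rw [← DPaux.bwd_image_g p.1.1 p.1.2 (hmem p.1 p.2).1.1 (hmem p.1 p.2).1.2 (hmem p.1 p.2).2.1 (hmem p.1 p.2).2.2,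
            ← DPaux.bwd_image_g q.1.1 q.1.2 (hmem q.1 q.2).1.1 (hmem q.1 q.2).1.2 (hmem q.1 q.2).2.1 (hmem q.1 q.2).2.2, h']
      exact Subtype.ext (Prod.ext h1 h2)
    · rintro ⟨A, hA, hAc⟩
      have hL : A.image DPaux.fA ⊆ Finset.Icc 1 n := by
        intro x hx
        rw [Finset.mem_image] at hx
        obtain ⟨a, -, rfl⟩ := hx
        rw [Finset.mem_Icc]
        exact ⟨(DPaux.fA_bounds a).1, (DPaux.fA_bounds a).2.1⟩
      have hR : A.image DPaux.gA ⊆ Finset.Icc 1 n := by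
        intro x hx
        rw [Finset.mem_image] at hx
        obtain ⟨a, -, rfl⟩ := hx
        rw [Finset.mem_Icc]
        exact ⟨(DPaux.fA_bounds a).2.2.1, (DPaux.fA_bounds a).2.2.2⟩
      have hLc : (A.image DPaux.fA).card = k := by
        rw [Finset.card_image_of_injOn (DPaux.injOn_fA hA), hAc]
      have hRc : (A.image DPaux.gA).card = k := by
        rw [Finset.card_image_of_injOn (DPaux.injOn_gA hA), hAc]
      refine ⟨⟨(A.image DPaux.fA, A.image DPaux.gA), ?_⟩, ?_⟩
      · rw [hP, Finset.mem_product, Finset.mem_powersetCard, Finset.mem_powersetCard]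
        exact ⟨⟨hL, hLc⟩, ⟨hR, hRc⟩⟩
      · exact Subtype.ext (DPaux.bwd_eq hA hAc hL hLc hR hRc)
  rw [hcongr, Nat.card_eq_finsetCard, hP, Finset.card_product, Finset.card_powersetCard,
    hIcc, pow_two]
end

section
/- Let L be a finite lattice in which every element has a canonical join representation, and let Θ be a congruence on L. If j is a canonical joinand of an element a ∈ L and Θ does not contract j, then j is a canonical joinand of π↓(a). Moreover, if π↓(a) = a, then Θ contracts none of the canonical joinands of a. -/
/-- `A` is the canonical join representation of `a`: `⋁A = a`, `A` is an antichain, and for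
every finite subset `B` with `⋁B = a`, every element of `A` lies below some element of `B`. -/
def IsCJR {α : Type*} [Lattice α] [OrderBot α] (A : Finset α) (a : α) : Prop :=
  A.sup id = a ∧ IsAntichain (· ≤ ·) (A : Set α) ∧
    ∀ B : Finset α, B.sup id = a → ∀ x ∈ A, ∃ y ∈ B, x ≤ y

/-- Let `L` be a finite lattice in which every element has a canonical join representation,
and let `Θ` be a lattice congruence on `L`, with `π` sending each element to the least
element of its `Θ`-class.  `Θ` contracts a join-irreducible `j` if `j` is congruent to the
(unique) element it covers.  If `j` is a canonical joinand of `a` and `Θ` does not contract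
`j`, then `j` is a canonical joinand of `π a`; moreover if `π a = a` then `Θ` contracts none
of the canonical joinands of `a`. -/
theorem canonical_joinand_congruence {α : Type*} [Lattice α] [OrderBot α] [Fintype α]
    (Θ : α → α → Prop) (hΘeq : Equivalence Θ)
    (hΘsup : ∀ a₁ a₂ b₁ b₂, Θ a₁ a₂ → Θ b₁ b₂ → Θ (a₁ ⊔ b₁) (a₂ ⊔ b₂))
    (hΘinf : ∀ a₁ a₂ b₁ b₂, Θ a₁ a₂ → Θ b₁ b₂ → Θ (a₁ ⊓ b₁) (a₂ ⊓ b₂))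
    (hCJR : ∀ a : α, ∃ A : Finset α, IsCJR A a)
    (π : α → α) (hπΘ : ∀ a, Θ (π a) a) (hπle : ∀ a b, Θ b a → π a ≤ b)
    (a : α) (A : Finset α) (hA : IsCJR A a) (j : α) (hj : j ∈ A) :
    ((¬ ∃ b, b ⋖ j ∧ Θ j b) → ∀ B : Finset α, IsCJR B (π a) → j ∈ B) ∧
      (π a = a → ¬ ∃ b, b ⋖ j ∧ Θ j b) := by
  classical
  obtain ⟨hAsup, hAanti, hAmin⟩ := hA
  have hπle' : ∀ x : α, π x ≤ x := fun x => hπle x x (hΘeq.refl x)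
  have hja : j ≤ a := hAsup ▸ Finset.le_sup (f := id) hj
  -- any strict lower bound is below a coatom of j
  have hcov : ∀ x y : α, x < y → ∃ b, x ≤ b ∧ b ⋖ y := by
    intro x y hxy
    obtain ⟨b, ⟨hxb, hby⟩, hmax⟩ := Set.Finite.exists_maximalFor id {c | x ≤ c ∧ c < y}
      (Set.toFinite _) ⟨x, le_refl x, hxy⟩
    exact ⟨b, hxb, hby, fun c hbc hcy =>
      (not_le_of_gt hbc) (hmax ⟨hxb.trans hbc.le, hcy⟩ hbc.le)⟩
  -- if Θ does not contract j, anything Θ-equivalent to j and below j equals j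
  have hfix : (¬ ∃ b, b ⋖ j ∧ Θ j b) → ∀ x, Θ j x → x ≤ j → x = j := by
    intro hnc x hΘjx hxj
    by_contra hne
    obtain ⟨b, hxb, hbj⟩ := hcov x j (lt_of_le_of_ne hxj hne)
    refine hnc ⟨b, hbj, ?_⟩
    have h := hΘsup j x b b hΘjx (hΘeq.refl b)
    rwa [sup_eq_left.mpr hbj.le, sup_eq_right.mpr hxb] at h
  have haerase : a = j ⊔ (A.erase j).sup id := by
    conv_lhs => rw [← hAsup, ← Finset.insert_erase hj]
    simp [Finset.sup_insert]
  have herase_le : (A.erase j).sup id ≤ a :=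
    Finset.sup_le fun x hx => hAsup ▸ Finset.le_sup (f := id) (Finset.mem_of_mem_erase hx)
  constructor
  · intro hnc B hB
    obtain ⟨hBsup, hBanti, hBmin⟩ := hB
    have hπj : π j = j := hfix hnc (π j) (hΘeq.symm (hπΘ j)) (hπle' j)
    have hjπa : j ≤ π a := by
      have h1 : Θ (π a ⊓ j) j := by
        have h := hΘinf (π a) a j j (hπΘ a) (hΘeq.refl j)
        rwa [inf_eq_right.mpr hja] at h
      exact inf_eq_right.mp (hfix hnc (π a ⊓ j) (hΘeq.symm h1) inf_le_right)
    have hπmono : ∀ x y : α, x ≤ y → π x ≤ π y := by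
      intro x y hxy
      have h1 : Θ (π y ⊓ π x) x := by
        have h := hΘinf (π y) y (π x) x (hπΘ y) (hπΘ x)
        rwa [inf_eq_right.mpr hxy] at h
      exact le_trans (hπle x _ h1) inf_le_left
    have hsupπ : ∀ s : Finset α, Θ (s.sup fun x => π x) (s.sup id) := by
      intro s
      induction s using Finset.induction_on with
      | empty => simpa using hΘeq.refl (⊥ : α)
      | insert _ _ h ih => simpa using hΘsup _ _ _ _ (hπΘ _) ih
    have hπa_eq : (A.sup fun x => π x) = π a := by
      apply le_antisymm
      · exact Finset.sup_le fun x hx => hπmono x a (hAsup ▸ Finset.le_sup (f := id) hx)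
      · exact hπle a _ (hAsup ▸ hsupπ A)
    have hCsup : (B ∪ A.erase j).sup id = a := by
      rw [Finset.sup_union, hBsup]
      apply le_antisymm
      · exact sup_le (hπle' a) herase_le
      · conv_lhs => rw [haerase]
        exact sup_le_sup_right hjπa _
    obtain ⟨y, hy, hjy⟩ := hAmin _ hCsup j hj
    rcases Finset.mem_union.mp hy with hyB | hyE
    · have himg : (A.image π).sup id = π a := by
        rw [Finset.sup_image]
        exact hπa_eq
      obtain ⟨z, hz, hyz⟩ := hBmin _ himg y hyB
      obtain ⟨x, hxA, rfl⟩ := Finset.mem_image.mp hz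
      have hjx : j ≤ x := hjy.trans (hyz.trans (hπle' x))
      have hxj : x = j := by
        by_contra hne
        exact hAanti hj hxA (fun h => hne h.symm) hjx
      have hyj : y = j := le_antisymm (by rw [← hπj, ← hxj]; exact hyz) hjy
      exact hyj ▸ hyB
    · exact absurd hjy (hAanti hj (Finset.mem_of_mem_erase hyE)
        (Ne.symm (Finset.ne_of_mem_erase hyE)))
  · rintro hπaa ⟨b, hbj, hΘjb⟩
    have hΘ' : Θ ((insert b (A.erase j)).sup id) a := by
      rw [Finset.sup_insert, haerase]
      exact hΘsup b j _ _ (hΘeq.symm hΘjb) (hΘeq.refl _)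
    have hsupA' : (insert b (A.erase j)).sup id = a := by
      apply le_antisymm
      · rw [Finset.sup_insert]
        exact sup_le (hbj.le.trans hja) herase_le
      · calc a = π a := hπaa.symm
          _ ≤ _ := hπle a _ hΘ'
    obtain ⟨y, hy, hjy⟩ := hAmin _ hsupA' j hj
    rcases Finset.mem_insert.mp hy with rfl | hyE
    · exact absurd hjy (not_le_of_gt hbj.lt)
    · exact absurd hjy (hAanti hj (Finset.mem_of_mem_erase hyE)
        (Ne.symm (Finset.ne_of_mem_erase hyE)))
end

section
/- For every integer n ≥ 1, the polynomial identity Cat(A_n; q) = (1+q)·Cat(A_{n−1}; q) + q·Σ_{i=1}^{n−1} Cat(A_{i−1}; q)·Cat(A_{n−i−1}; q) holds in ℚ[q]. -/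
open Polynomial

/-- The type-A Catalan polynomial `Cat(Aₙ; q) = Σₖ Narₖ(Aₙ) qᵏ`, where
`Narₖ(Aₙ) = (1/(n+1))·C(n+1, k)·C(n+1, k+1)` are the type-A Narayana numbers. -/
noncomputable def catA (n : ℕ) : Polynomial ℚ :=
  ∑ k ∈ Finset.range (n + 1),
    C ((1 / ((n : ℚ) + 1)) * ((n + 1).choose k : ℚ) * ((n + 1).choose (k + 1) : ℚ)) * X ^ k

namespace CatARecAux

open Finset

/-- The (shifted) type-A Narayana number as a rational. -/
def nar (n k : ℕ) : ℚ :=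
  (1 / ((n : ℚ) + 1)) * ((n + 1).choose k : ℚ) * ((n + 1).choose (k + 1) : ℚ)

lemma coeff_catA (n k : ℕ) : (catA n).coeff k = nar n k := by
  unfold catA
  rw [finset_sum_coeff]
  simp only [coeff_C_mul, coeff_X_pow, mul_ite, mul_one, mul_zero]
  rw [Finset.sum_ite_eq (Finset.range (n + 1)) k]
  by_cases h : k ∈ Finset.range (n + 1)
  · rw [if_pos h]; rfl
  · rw [if_neg h]
    simp only [Finset.mem_range, not_lt] at h
    unfold nar
    rw [Nat.choose_eq_zero_of_lt (by omega : n + 1 < k + 1)]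
    simp

lemma nar_zero (n : ℕ) : nar n 0 = 1 := by
  unfold nar
  have h : ((n : ℚ) + 1) ≠ 0 := by positivity
  rw [Nat.choose_zero_right, Nat.choose_one_right]
  push_cast
  field_simp

lemma cast_catalan (j : ℕ) : (catalan j : ℚ) = ((2 * j).choose j : ℚ) / ((j : ℚ) + 1) := by
  have h2 : (j + 1) * catalan j = (2 * j).choose j := succ_mul_catalan_eq_centralBinom j
  have h3 : ((j : ℚ) + 1) ≠ 0 := by positivity
  rw [eq_div_iff h3]
  have := congrArg (fun x : ℕ => (x : ℚ)) h2
  push_cast at this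
  linarith [this]

/-- Core factorial computation for the termwise split of Coker's identity. -/
lemma core1 (t u v : ℕ) :
    ((2 * t + 2 + u + v).choose (2 * t + 2) : ℚ) * (catalan (t + 1) : ℚ) *
        ((u + v).choose u : ℚ)
      = ((2 * t + 2 + u + v).choose (t + 1 + u) : ℚ) * ((t + 1 + u).choose (t + 1) : ℚ) *
          ((t + 1 + v).choose (t + 1) : ℚ)
        - ((2 * t + 2 + u + v).choose (t + u) : ℚ) * ((t + u).choose t : ℚ) *
          ((t + 2 + v).choose (t + 2) : ℚ) := by
  rw [cast_catalan]
  rw [Nat.cast_choose ℚ (show 2 * t + 2 ≤ 2 * t + 2 + u + v by omega),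
      Nat.cast_choose ℚ (show t + 1 ≤ 2 * (t + 1) by omega),
      Nat.cast_choose ℚ (show u ≤ u + v by omega),
      Nat.cast_choose ℚ (show t + 1 + u ≤ 2 * t + 2 + u + v by omega),
      Nat.cast_choose ℚ (show t + 1 ≤ t + 1 + u by omega),
      Nat.cast_choose ℚ (show t + 1 ≤ t + 1 + v by omega),
      Nat.cast_choose ℚ (show t + u ≤ 2 * t + 2 + u + v by omega),
      Nat.cast_choose ℚ (show t ≤ t + u by omega),
      Nat.cast_choose ℚ (show t + 2 ≤ t + 2 + v by omega)]
  rw [show 2 * t + 2 + u + v - (2 * t + 2) = u + v by omega,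
      show 2 * (t + 1) - (t + 1) = t + 1 by omega,
      show 2 * (t + 1) = 2 * t + 2 by omega,
      show u + v - u = v by omega,
      show 2 * t + 2 + u + v - (t + 1 + u) = t + 1 + v by omega,
      show t + 1 + u - (t + 1) = u by omega,
      show t + 1 + v - (t + 1) = v by omega,
      show 2 * t + 2 + u + v - (t + u) = t + 2 + v by omega,
      show t + u - t = u by omega,
      show t + 2 + v - (t + 2) = v by omega]
  have e1 : ((t + 2).factorial : ℚ) = ((t : ℚ) + 2) * ((t + 1).factorial : ℚ) := by
    rw [show t + 2 = (t + 1) + 1 by omega, Nat.factorial_succ]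
    push_cast; ring
  have e2 : ((t + 1).factorial : ℚ) = ((t : ℚ) + 1) * ((t).factorial : ℚ) := by
    rw [Nat.factorial_succ]; push_cast; ring
  rw [e1, e2]
  have f0 : ((t).factorial : ℚ) ≠ 0 := by exact_mod_cast Nat.factorial_ne_zero t
  have f1 : ((u).factorial : ℚ) ≠ 0 := by exact_mod_cast Nat.factorial_ne_zero u
  have f2 : ((v).factorial : ℚ) ≠ 0 := by exact_mod_cast Nat.factorial_ne_zero v
  have f3 : (((u + v)).factorial : ℚ) ≠ 0 := by exact_mod_cast Nat.factorial_ne_zero (u + v)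
  have f4 : (((2 * t + 2)).factorial : ℚ) ≠ 0 := by exact_mod_cast Nat.factorial_ne_zero (2 * t + 2)
  have f5 : (((t + 1 + u)).factorial : ℚ) ≠ 0 := by exact_mod_cast Nat.factorial_ne_zero (t + 1 + u)
  have f6 : (((t + 1 + v)).factorial : ℚ) ≠ 0 := by exact_mod_cast Nat.factorial_ne_zero (t + 1 + v)
  have f7 : (((t + u)).factorial : ℚ) ≠ 0 := by exact_mod_cast Nat.factorial_ne_zero (t + u)
  have f8 : (((t + 2 + v)).factorial : ℚ) ≠ 0 := by exact_mod_cast Nat.factorial_ne_zero (t + 2 + v)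
  have g1 : ((t : ℚ) + 1) ≠ 0 := by positivity
  have g2 : ((t : ℚ) + 2) ≠ 0 := by positivity
  have g3 : (((t : ℕ) + 1 : ℕ) : ℚ) + 1 ≠ 0 := by push_cast; positivity
  field_simp
  push_cast
  ring

/-- Termwise split of Coker's identity, `j = t+1 ≥ 1` case. -/
lemma TS1 (n k t : ℕ) (h : t + 1 ≤ k) :
    (n.choose (2 * (t + 1)) : ℚ) * (catalan (t + 1) : ℚ) *
        ((n - 2 * (t + 1)).choose (k - (t + 1)) : ℚ)
      = (n.choose k : ℚ) * (k.choose (t + 1) : ℚ) * ((n - k).choose (t + 1) : ℚ)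
        - (n.choose (k - 1) : ℚ) * ((k - 1).choose t : ℚ) * ((n - k + 1).choose (t + 2) : ℚ) := by
  by_cases h1 : n < 2 * (t + 1)
  · rw [Nat.choose_eq_zero_of_lt h1,
        Nat.choose_eq_zero_of_lt (show n - k < t + 1 by omega),
        Nat.choose_eq_zero_of_lt (show n - k + 1 < t + 2 by omega)]
    simp
  · push_neg at h1
    by_cases h2 : n < k + (t + 1)
    · rw [Nat.choose_eq_zero_of_lt (show n - 2 * (t + 1) < k - (t + 1) by omega),
          Nat.choose_eq_zero_of_lt (show n - k < t + 1 by omega),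
          Nat.choose_eq_zero_of_lt (show n - k + 1 < t + 2 by omega)]
      simp
    · push_neg at h2
      obtain ⟨u, rfl⟩ : ∃ u, k = t + 1 + u := ⟨k - (t + 1), by omega⟩
      obtain ⟨v, rfl⟩ : ∃ v, n = 2 * t + 2 + u + v := ⟨n - (2 * t + 2 + u), by omega⟩
      rw [show 2 * t + 2 + u + v - 2 * (t + 1) = u + v by omega,
          show t + 1 + u - (t + 1) = u by omega,
          show t + 1 + u - 1 = t + u by omega,
          show 2 * t + 2 + u + v - (t + 1 + u) + 1 = t + 2 + v by omega,
          show 2 * t + 2 + u + v - (t + 1 + u) = t + 1 + v by omega,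
          show 2 * (t + 1) = 2 * t + 2 by ring]
      exact core1 t u v

/-- Core factorial computation: Narayana as a 2×2 determinant of binomials. -/
lemma core4 (t w : ℕ) :
    nar (t + 2 + w) (t + 1)
      = ((t + 2 + w).choose (t + 1) : ℚ) ^ 2
        - ((t + 2 + w).choose t : ℚ) * ((t + 2 + w).choose (t + 2) : ℚ) := by
  unfold nar
  rw [show (t + 2 + w) + 1 = t + 3 + w by omega]
  rw [Nat.cast_choose ℚ (show t + 1 ≤ t + 3 + w by omega),
      Nat.cast_choose ℚ (show t + 1 + 1 ≤ t + 3 + w by omega),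
      Nat.cast_choose ℚ (show t + 1 ≤ t + 2 + w by omega),
      Nat.cast_choose ℚ (show t ≤ t + 2 + w by omega),
      Nat.cast_choose ℚ (show t + 2 ≤ t + 2 + w by omega)]
  rw [show t + 3 + w - (t + 1) = w + 2 by omega,
      show t + 1 + 1 = t + 2 by omega,
      show t + 3 + w - (t + 2) = w + 1 by omega,
      show t + 2 + w - (t + 1) = w + 1 by omega,
      show t + 2 + w - t = w + 2 by omega,
      show t + 2 + w - (t + 2) = w by omega]
  have e0 : ((t + 3 + w).factorial : ℚ) = ((t : ℚ) + 3 + w) * ((t + 2 + w).factorial : ℚ) := by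
    rw [show t + 3 + w = (t + 2 + w) + 1 by omega, Nat.factorial_succ]
    push_cast; ring
  have e1 : ((w + 2).factorial : ℚ) = ((w : ℚ) + 2) * ((w + 1).factorial : ℚ) := by
    rw [show w + 2 = (w + 1) + 1 by omega, Nat.factorial_succ]; push_cast; ring
  have e2 : ((w + 1).factorial : ℚ) = ((w : ℚ) + 1) * ((w).factorial : ℚ) := by
    rw [Nat.factorial_succ]; push_cast; ring
  have e3 : ((t + 2).factorial : ℚ) = ((t : ℚ) + 2) * ((t + 1).factorial : ℚ) := by
    rw [show t + 2 = (t + 1) + 1 by omega, Nat.factorial_succ]; push_cast; ring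
  have e4 : ((t + 1).factorial : ℚ) = ((t : ℚ) + 1) * ((t).factorial : ℚ) := by
    rw [Nat.factorial_succ]; push_cast; ring
  rw [e0, e1, e2, e3, e4]
  have f0 : ((t).factorial : ℚ) ≠ 0 := by exact_mod_cast Nat.factorial_ne_zero t
  have f1 : ((w).factorial : ℚ) ≠ 0 := by exact_mod_cast Nat.factorial_ne_zero w
  have f2 : (((t + 2 + w)).factorial : ℚ) ≠ 0 := by exact_mod_cast Nat.factorial_ne_zero (t + 2 + w)
  have g1 : ((t : ℚ) + 1) ≠ 0 := by positivity
  have g2 : ((t : ℚ) + 2) ≠ 0 := by positivity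
  have g3 : ((w : ℚ) + 1) ≠ 0 := by positivity
  have g4 : ((w : ℚ) + 2) ≠ 0 := by positivity
  have g5 : ((t : ℚ) + 2 + w + 1) ≠ 0 := by positivity
  have g6 : ((t : ℚ) + 3 + w) ≠ 0 := by positivity
  field_simp
  push_cast
  ring

/-- Narayana number as a 2×2 determinant (for `1 ≤ k ≤ n`). -/
lemma step4 (n s : ℕ) (hk : s + 1 ≤ n) :
    nar n (s + 1)
      = (n.choose (s + 1) : ℚ) ^ 2 - (n.choose s : ℚ) * (n.choose (s + 2) : ℚ) := by
  rcases eq_or_lt_of_le hk with heq | hlt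
  · -- k = n
    subst heq
    unfold nar
    have h1 : (s + 1 + 1).choose (s + 1) = s + 2 := by
      rw [← Nat.choose_symm (by omega : s + 1 ≤ s + 1 + 1),
          show s + 1 + 1 - (s + 1) = 1 by omega, Nat.choose_one_right]
    rw [h1, Nat.choose_self, Nat.choose_eq_zero_of_lt (by omega : s + 1 < s + 2),
        Nat.choose_self]
    have h : ((s : ℚ) + 1 + 1) ≠ 0 := by positivity
    push_cast
    field_simp
    ring
  · obtain ⟨w, rfl⟩ : ∃ w, n = s + 2 + w := ⟨n - (s + 2), by omega⟩
    exact core4 s w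

/-- Vandermonde variant: `Σⱼ C(k,j)·C(n−k,j) = C(n,k)` for `k ≤ n`. -/
lemma V1 (n k : ℕ) (hk : k ≤ n) :
    ∑ j ∈ Finset.range (k + 1), (k.choose j : ℚ) * ((n - k).choose j : ℚ)
      = (n.choose k : ℚ) := by
  have h := Nat.add_choose_eq k (n - k) k
  rw [Finset.Nat.sum_antidiagonal_eq_sum_range_succ_mk, show k + (n - k) = n by omega] at h
  rw [← Finset.sum_range_reflect (fun x => k.choose x * (n - k).choose (k - x)) (k + 1)] at h
  have h2 : ∀ j ∈ Finset.range (k + 1),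
      (k.choose j : ℚ) * ((n - k).choose j : ℚ)
        = ((k.choose (k + 1 - 1 - j) * (n - k).choose (k - (k + 1 - 1 - j)) : ℕ) : ℚ) := by
    intro j hj
    simp only [Finset.mem_range] at hj
    rw [show k + 1 - 1 - j = k - j by omega, show k - (k - j) = j by omega,
        Nat.choose_symm (by omega : j ≤ k)]
    push_cast; ring
  rw [Finset.sum_congr rfl h2, ← Nat.cast_sum, ← h]
lemma V2 (n s : ℕ) (hk : s + 1 ≤ n) :
    ∑ t ∈ Finset.range (s + 1), (s.choose t : ℚ) * ((n - s).choose (t + 2) : ℚ)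
      = (n.choose (s + 2) : ℚ) := by
  have h := Nat.add_choose_eq s (n - s) (s + 2)
  rw [Finset.Nat.sum_antidiagonal_eq_sum_range_succ_mk, show s + (n - s) = n by omega] at h
  simp only [Nat.succ_eq_add_one] at h
  rw [show s + 2 + 1 = (s + 1) + 1 + 1 by omega, Finset.sum_range_succ, Finset.sum_range_succ] at h
  simp only [Nat.choose_eq_zero_of_lt (by omega : s < s + 1),
      Nat.choose_eq_zero_of_lt (by omega : s < s + 1 + 1)] at h
  simp only [zero_mul, add_zero] at h
  rw [← Finset.sum_range_reflect (fun x => s.choose x * (n - s).choose (s + 2 - x)) (s + 1)] at h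
  have h2 : ∀ t ∈ Finset.range (s + 1),
      (s.choose t : ℚ) * ((n - s).choose (t + 2) : ℚ)
        = ((s.choose (s + 1 - 1 - t) * (n - s).choose (s + 2 - (s + 1 - 1 - t)) : ℕ) : ℚ) := by
    intro t ht
    simp only [Finset.mem_range] at ht
    rw [show s + 1 - 1 - t = s - t by omega, show s + 2 - (s - t) = t + 2 by omega,
        Nat.choose_symm (by omega : t ≤ s)]
    push_cast; ring
  rw [Finset.sum_congr rfl h2, ← Nat.cast_sum, ← h]

/-- Coker's identity: the γ-expansion of the Narayana numbers. -/
lemma K3 (n k : ℕ) :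
    nar n k = ∑ j ∈ Finset.range (k + 1),
      (n.choose (2 * j) : ℚ) * (catalan j : ℚ) * ((n - 2 * j).choose (k - j) : ℚ) := by
  by_cases hkn : n < k
  · have hL : nar n k = 0 := by
      unfold nar
      rw [Nat.choose_eq_zero_of_lt (by omega : n + 1 < k + 1)]
      simp
    rw [hL]
    symm
    apply Finset.sum_eq_zero
    intro j hj
    simp only [Finset.mem_range] at hj
    rcases lt_or_ge n (2 * j) with h | h
    · rw [Nat.choose_eq_zero_of_lt h]; simp
    · rw [Nat.choose_eq_zero_of_lt (show n - 2 * j < k - j by omega)]; simp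
  · push_neg at hkn
    cases k with
    | zero =>
      rw [nar_zero]
      simp
    | succ s =>
      -- split the sum: j = 0 term plus j = t+1 terms
      rw [Finset.sum_range_succ']
      have hj0 : (n.choose (2 * 0) : ℚ) * (catalan 0 : ℚ) * ((n - 2 * 0).choose (s + 1 - 0) : ℚ)
          = (n.choose (s + 1) : ℚ) * ((s + 1).choose 0 : ℚ) * ((n - (s + 1)).choose 0 : ℚ) := by
        simp
      rw [hj0]
      have hsplit : ∀ t ∈ Finset.range (s + 1),
          (n.choose (2 * (t + 1)) : ℚ) * (catalan (t + 1) : ℚ) *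
              ((n - 2 * (t + 1)).choose (s + 1 - (t + 1)) : ℚ)
            = (n.choose (s + 1) : ℚ) * ((s + 1).choose (t + 1) : ℚ) *
                ((n - (s + 1)).choose (t + 1) : ℚ)
              - (n.choose s : ℚ) * ((s.choose t : ℚ)) * (((n - s).choose (t + 2) : ℚ)) := by
        intro t ht
        simp only [Finset.mem_range] at ht
        have := TS1 n (s + 1) t (by omega)
        rw [show s + 1 - 1 = s by omega, show n - (s + 1) + 1 = n - s by omega] at this
        exact this
      rw [Finset.sum_congr rfl hsplit, Finset.sum_sub_distrib]
      have hT1 : (∑ t ∈ Finset.range (s + 1),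
            (n.choose (s + 1) : ℚ) * ((s + 1).choose (t + 1) : ℚ) *
              ((n - (s + 1)).choose (t + 1) : ℚ))
          + (n.choose (s + 1) : ℚ) * ((s + 1).choose 0 : ℚ) * ((n - (s + 1)).choose 0 : ℚ)
          = (n.choose (s + 1) : ℚ) ^ 2 := by
        rw [← Finset.sum_range_succ'
          (fun j => (n.choose (s + 1) : ℚ) * ((s + 1).choose j : ℚ) *
            ((n - (s + 1)).choose j : ℚ)) (s + 1)]
        have : ∀ j ∈ Finset.range (s + 2),
            (n.choose (s + 1) : ℚ) * ((s + 1).choose j : ℚ) * ((n - (s + 1)).choose j : ℚ)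
              = (n.choose (s + 1) : ℚ) * (((s + 1).choose j : ℚ) *
                ((n - (s + 1)).choose j : ℚ)) := fun j _ => by ring
        rw [Finset.sum_congr rfl this, ← Finset.mul_sum, V1 n (s + 1) hkn]
        ring
      have hT2 : (∑ t ∈ Finset.range (s + 1),
            (n.choose s : ℚ) * ((s.choose t : ℚ)) * (((n - s).choose (t + 2) : ℚ)))
          = (n.choose s : ℚ) * (n.choose (s + 2) : ℚ) := by
        have : ∀ t ∈ Finset.range (s + 1),
            (n.choose s : ℚ) * ((s.choose t : ℚ)) * (((n - s).choose (t + 2) : ℚ))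
              = (n.choose s : ℚ) * ((s.choose t : ℚ) * ((n - s).choose (t + 2) : ℚ)) :=
          fun t _ => by ring
        rw [Finset.sum_congr rfl this, ← Finset.mul_sum, V2 n s hkn]
      rw [step4 n s hkn]
      linarith [hT1, hT2]

/-- Guarded version of Coker's identity with uniform summation range. -/
lemma K3ext (p a s : ℕ) (h : a ≤ s) :
    nar p a = ∑ j ∈ Finset.range (s + 1),
      if j ≤ a then
        (p.choose (2 * j) : ℚ) * (catalan j : ℚ) * ((p - 2 * j).choose (a - j) : ℚ)
      else 0 := by
  rw [K3]
  have h1 : ∀ j ∈ Finset.range (a + 1),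
      (p.choose (2 * j) : ℚ) * (catalan j : ℚ) * ((p - 2 * j).choose (a - j) : ℚ)
        = if j ≤ a then
            (p.choose (2 * j) : ℚ) * (catalan j : ℚ) * ((p - 2 * j).choose (a - j) : ℚ)
          else 0 := by
    intro j hj
    simp only [Finset.mem_range] at hj
    rw [if_pos (by omega)]
  rw [Finset.sum_congr rfl h1]
  apply Finset.sum_subset
  · intro x hx
    simp only [Finset.mem_range] at *
    omega
  · intro x _ hx
    simp only [Finset.mem_range, not_lt] at hx
    rw [if_neg (by omega)]

/-- Guarded Vandermonde convolution over the antidiagonal. -/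
lemma VG (A B j1 j2 s : ℕ) :
    ∑ p ∈ Finset.HasAntidiagonal.antidiagonal s,
      (if j1 ≤ p.1 then (A.choose (p.1 - j1) : ℚ) else 0) *
        (if j2 ≤ p.2 then (B.choose (p.2 - j2) : ℚ) else 0)
    = if j1 + j2 ≤ s then ((A + B).choose (s - j1 - j2) : ℚ) else 0 := by
  rw [Finset.Nat.sum_antidiagonal_eq_sum_range_succ_mk]
  by_cases hg : j1 + j2 ≤ s
  · rw [if_pos hg]
    have hV := Nat.add_choose_eq A B (s - j1 - j2)
    rw [Finset.Nat.sum_antidiagonal_eq_sum_range_succ_mk] at hV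
    have hsub : Finset.Icc j1 (s - j2) ⊆ Finset.range (s + 1) := by
      intro x hx
      simp only [Finset.mem_Icc, Finset.mem_range] at *
      omega
    rw [← Finset.sum_subset hsub ?hzero]
    case hzero =>
      intro x hx hnx
      simp only [Finset.mem_Icc, Finset.mem_range, not_and, not_le] at hx hnx
      rcases lt_or_ge x j1 with hc | hc
      · rw [if_neg (by omega), zero_mul]
      · rw [if_neg (show ¬ j2 ≤ s - x by omega), mul_zero]
    rw [← Finset.Ico_add_one_right_eq_Icc, Finset.sum_Ico_eq_sum_range,
        show s - j2 + 1 - j1 = (s - j1 - j2) + 1 by omega]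
    have h2 : ∀ i ∈ Finset.range ((s - j1 - j2) + 1),
        (if j1 ≤ j1 + i then (A.choose (j1 + i - j1) : ℚ) else 0) *
          (if j2 ≤ s - (j1 + i) then (B.choose (s - (j1 + i) - j2) : ℚ) else 0)
        = ((A.choose i * B.choose ((s - j1 - j2) - i) : ℕ) : ℚ) := by
      intro i hi
      simp only [Finset.mem_range] at hi
      rw [if_pos (by omega), if_pos (by omega), show j1 + i - j1 = i by omega,
          show s - (j1 + i) - j2 = (s - j1 - j2) - i by omega]
      push_cast; ring
    rw [Finset.sum_congr rfl h2, ← Nat.cast_sum, ← hV]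
  · rw [if_neg hg]
    apply Finset.sum_eq_zero
    intro x hx
    simp only [Finset.mem_range] at hx
    rcases lt_or_ge x j1 with hc | hc
    · rw [if_neg (by omega), zero_mul]
    · rw [if_neg (show ¬ j2 ≤ s - x by omega), mul_zero]

/-- Hockey-stick/Vandermonde for sums over the top index. -/
lemma K4' (M p q : ℕ) :
    ∑ a ∈ Finset.range M, a.choose p * (M - 1 - a).choose q = M.choose (p + q + 1) := by
  induction q generalizing M with
  | zero =>
    cases M with
    | zero => simp
    | succ m =>
      have h1 : ∀ a ∈ Finset.range (m + 1), a.choose p * (m + 1 - 1 - a).choose 0 = a.choose p := by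
        intro a _
        rw [Nat.choose_zero_right, mul_one]
      rw [Finset.sum_congr rfl h1]
      have h2 := Nat.sum_Icc_choose m p
      rw [← h2]
      rcases le_or_gt p m with hp | hp
      · rw [Finset.range_eq_Ico, ← Finset.Ico_add_one_right_eq_Icc]
        rw [← Finset.sum_Ico_consecutive _ (Nat.zero_le p) (by omega : p ≤ m + 1)]
        have h3 : ∀ a ∈ Finset.Ico 0 p, a.choose p = 0 := by
          intro a ha
          simp only [Finset.mem_Ico] at ha
          exact Nat.choose_eq_zero_of_lt (by omega)
        rw [Finset.sum_congr rfl h3, Finset.sum_const_zero, zero_add]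
      · have h3 : ∀ a ∈ Finset.range (m + 1), a.choose p = 0 := by
          intro a ha
          simp only [Finset.mem_range] at ha
          exact Nat.choose_eq_zero_of_lt (by omega)
        rw [Finset.sum_congr rfl h3, Finset.sum_const_zero]
        have h4 : Finset.Icc p m = ∅ := Finset.Icc_eq_empty (by omega)
        rw [h4, Finset.sum_empty]
  | succ q ih =>
    induction M with
    | zero => simp
    | succ m ihm =>
      rw [Finset.sum_range_succ, show m + 1 - 1 - m = 0 by omega,
          Nat.choose_eq_zero_of_lt (by omega : 0 < q + 1), mul_zero, add_zero]
      have h1 : ∀ a ∈ Finset.range m,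
          a.choose p * (m + 1 - 1 - a).choose (q + 1)
            = a.choose p * (m - 1 - a).choose (q + 1) + a.choose p * (m - 1 - a).choose q := by
        intro a ha
        simp only [Finset.mem_range] at ha
        rw [show m + 1 - 1 - a = (m - 1 - a) + 1 by omega, Nat.choose_succ_succ',
            Nat.mul_add]
        ring
      rw [Finset.sum_congr rfl h1, Finset.sum_add_distrib, ihm, ih m,
          show p + (q + 1) + 1 = (p + q + 1) + 1 by omega, Nat.choose_succ_succ' (m) (p + q + 1)]
      omega

/-- Collapsing a guarded double sum via the Catalan convolution. -/
lemma DS (s : ℕ) (h : ℕ → ℚ) :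
    (∑ j1 ∈ Finset.range (s + 1), ∑ j2 ∈ Finset.range (s + 1),
      if j1 + j2 ≤ s then (catalan j1 : ℚ) * (catalan j2 : ℚ) * h (j1 + j2) else 0)
    = ∑ t ∈ Finset.range (s + 1), (catalan (t + 1) : ℚ) * h t := by
  rw [← Finset.sum_product']
  rw [← Finset.sum_filter]
  have hset : (Finset.range (s + 1) ×ˢ Finset.range (s + 1)).filter (fun p => p.1 + p.2 ≤ s)
      = (Finset.range (s + 1)).biUnion (fun t => Finset.HasAntidiagonal.antidiagonal t) := by
    ext p
    simp only [Finset.mem_filter, Finset.mem_product, Finset.mem_range, Finset.mem_biUnion,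
      Finset.HasAntidiagonal.mem_antidiagonal]
    constructor
    · intro hp
      exact ⟨p.1 + p.2, by omega, rfl⟩
    · rintro ⟨t, ht, hpt⟩
      omega
  rw [hset, Finset.sum_biUnion ?disj]
  case disj =>
    intro x _ y _ hxy
    simp only [Function.onFun]
    rw [Finset.disjoint_left]
    intro p hp1 hp2
    rw [Finset.HasAntidiagonal.mem_antidiagonal] at hp1 hp2
    exact hxy (hp1 ▸ hp2.symm ▸ rfl)
  apply Finset.sum_congr rfl
  intro t _
  have h1 : ∀ p ∈ Finset.HasAntidiagonal.antidiagonal t,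
      (catalan p.1 : ℚ) * (catalan p.2 : ℚ) * h (p.1 + p.2)
        = ((catalan p.1 * catalan p.2 : ℕ) : ℚ) * h t := by
    intro p hp
    rw [Finset.HasAntidiagonal.mem_antidiagonal] at hp
    rw [hp]
    push_cast
    ring
  rw [Finset.sum_congr rfl h1, ← Finset.sum_mul, ← Nat.cast_sum, ← catalan_succ']

/-- The inner double-sum computation for a fixed first-return position `i`. -/
lemma inner_i (m s i : ℕ) (hi1 : 1 ≤ i) (hi2 : i ≤ m) :
    (∑ p ∈ Finset.HasAntidiagonal.antidiagonal s, nar (i - 1) p.1 * nar (m - i) p.2)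
    = ∑ j1 ∈ Finset.range (s + 1), ∑ j2 ∈ Finset.range (s + 1),
        (if j1 + j2 ≤ s then
          ((i - 1).choose (2 * j1) : ℚ) * ((m - i).choose (2 * j2) : ℚ) *
            ((catalan j1 : ℚ) * (catalan j2 : ℚ) *
              ((m - 1 - 2 * (j1 + j2)).choose (s - (j1 + j2)) : ℚ))
         else 0) := by
  have ha : ∀ p ∈ Finset.HasAntidiagonal.antidiagonal s, nar (i - 1) p.1 * nar (m - i) p.2
      = ∑ j1 ∈ Finset.range (s + 1), ∑ j2 ∈ Finset.range (s + 1),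
          (if j1 ≤ p.1 then ((i - 1).choose (2 * j1) : ℚ) * (catalan j1 : ℚ) *
              (((i - 1) - 2 * j1).choose (p.1 - j1) : ℚ) else 0) *
            (if j2 ≤ p.2 then ((m - i).choose (2 * j2) : ℚ) * (catalan j2 : ℚ) *
              (((m - i) - 2 * j2).choose (p.2 - j2) : ℚ) else 0) := by
    intro p hp
    rw [Finset.HasAntidiagonal.mem_antidiagonal] at hp
    rw [K3ext (i - 1) p.1 s (by omega), K3ext (m - i) p.2 s (by omega), Finset.sum_mul_sum]
  rw [Finset.sum_congr rfl ha]
  rw [Finset.sum_comm]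
  apply Finset.sum_congr rfl
  intro j1 _
  rw [Finset.sum_comm]
  apply Finset.sum_congr rfl
  intro j2 _
  have hc : ∀ p ∈ Finset.HasAntidiagonal.antidiagonal s,
      (if j1 ≤ p.1 then ((i - 1).choose (2 * j1) : ℚ) * (catalan j1 : ℚ) *
          (((i - 1) - 2 * j1).choose (p.1 - j1) : ℚ) else 0) *
        (if j2 ≤ p.2 then ((m - i).choose (2 * j2) : ℚ) * (catalan j2 : ℚ) *
          (((m - i) - 2 * j2).choose (p.2 - j2) : ℚ) else 0)
      = (((i - 1).choose (2 * j1) : ℚ) * (catalan j1 : ℚ) * ((m - i).choose (2 * j2) : ℚ) *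
          (catalan j2 : ℚ)) *
        ((if j1 ≤ p.1 then (((i - 1) - 2 * j1).choose (p.1 - j1) : ℚ) else 0) *
          (if j2 ≤ p.2 then (((m - i) - 2 * j2).choose (p.2 - j2) : ℚ) else 0)) := by
    intro p _
    split_ifs <;> ring
  rw [Finset.sum_congr rfl hc, ← Finset.mul_sum, VG]
  split_ifs with hg
  · by_cases hz1 : (i - 1).choose (2 * j1) = 0
    · rw [hz1]; simp
    by_cases hz2 : (m - i).choose (2 * j2) = 0
    · rw [hz2]; simp
    have t1 : 2 * j1 ≤ i - 1 := by
      by_contra hcon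
      exact hz1 (Nat.choose_eq_zero_of_lt (by omega))
    have t2 : 2 * j2 ≤ m - i := by
      by_contra hcon
      exact hz2 (Nat.choose_eq_zero_of_lt (by omega))
    rw [show ((i - 1) - 2 * j1) + ((m - i) - 2 * j2) = m - 1 - 2 * (j1 + j2) by omega,
        show s - j1 - j2 = s - (j1 + j2) by omega]
    ring
  · rw [mul_zero]

/-- The convolution sum in closed form. -/
lemma hDD (m s : ℕ) :
    (∑ i ∈ Finset.Icc 1 m, ∑ p ∈ Finset.HasAntidiagonal.antidiagonal s, nar (i - 1) p.1 * nar (m - i) p.2)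
    = ∑ t ∈ Finset.range (s + 1),
        (catalan (t + 1) : ℚ) * ((m.choose (2 * t + 1) : ℚ) *
          ((m - 1 - 2 * t).choose (s - t) : ℚ)) := by
  have h1 : ∀ i ∈ Finset.Icc 1 m,
      (∑ p ∈ Finset.HasAntidiagonal.antidiagonal s, nar (i - 1) p.1 * nar (m - i) p.2)
      = ∑ j1 ∈ Finset.range (s + 1), ∑ j2 ∈ Finset.range (s + 1),
          (if j1 + j2 ≤ s then
            ((i - 1).choose (2 * j1) : ℚ) * ((m - i).choose (2 * j2) : ℚ) *
              ((catalan j1 : ℚ) * (catalan j2 : ℚ) *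
                ((m - 1 - 2 * (j1 + j2)).choose (s - (j1 + j2)) : ℚ))
           else 0) := by
    intro i hi
    rw [Finset.mem_Icc] at hi
    exact inner_i m s i hi.1 hi.2
  rw [Finset.sum_congr rfl h1]
  rw [Finset.sum_comm]
  rw [← DS s (fun t => (m.choose (2 * t + 1) : ℚ) * ((m - 1 - 2 * t).choose (s - t) : ℚ))]
  apply Finset.sum_congr rfl
  intro j1 _
  rw [Finset.sum_comm]
  apply Finset.sum_congr rfl
  intro j2 _
  by_cases hg : j1 + j2 ≤ s
  · simp only [if_pos hg]
    have hsplit : ∀ i ∈ Finset.Icc 1 m,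
        ((i - 1).choose (2 * j1) : ℚ) * ((m - i).choose (2 * j2) : ℚ) *
            ((catalan j1 : ℚ) * (catalan j2 : ℚ) *
              ((m - 1 - 2 * (j1 + j2)).choose (s - (j1 + j2)) : ℚ))
          = (((i - 1).choose (2 * j1) * (m - i).choose (2 * j2) : ℕ) : ℚ) *
              ((catalan j1 : ℚ) * (catalan j2 : ℚ) *
                ((m - 1 - 2 * (j1 + j2)).choose (s - (j1 + j2)) : ℚ)) := by
      intro i _
      push_cast
      ring
    rw [Finset.sum_congr rfl hsplit, ← Finset.sum_mul, ← Nat.cast_sum]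
    have hK : (∑ i ∈ Finset.Icc 1 m, (i - 1).choose (2 * j1) * (m - i).choose (2 * j2))
        = m.choose (2 * (j1 + j2) + 1) := by
      rw [← Finset.Ico_add_one_right_eq_Icc, Finset.sum_Ico_eq_sum_range]
      rw [show m + 1 - 1 = m by omega]
      have hr : ∀ x ∈ Finset.range m,
          (1 + x - 1).choose (2 * j1) * (m - (1 + x)).choose (2 * j2)
            = x.choose (2 * j1) * (m - 1 - x).choose (2 * j2) := by
        intro x _
        rw [show 1 + x - 1 = x by omega, show m - (1 + x) = m - 1 - x by omega]
      rw [Finset.sum_congr rfl hr, K4' m (2 * j1) (2 * j2),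
          show 2 * j1 + 2 * j2 + 1 = 2 * (j1 + j2) + 1 by omega]
    rw [hK]
    ring
  · simp only [if_neg hg]
    exact Finset.sum_const_zero

/-- Pascal splitting of the top binomial in Coker form. -/
lemma hAB (m s : ℕ) :
    (∑ j ∈ Finset.range (s + 2), ((m + 1).choose (2 * j) : ℚ) * (catalan j : ℚ) *
        (((m + 1) - 2 * j).choose (s + 1 - j) : ℚ))
    = (∑ j ∈ Finset.range (s + 2), (m.choose (2 * j) : ℚ) * (catalan j : ℚ) *
        (((m + 1) - 2 * j).choose (s + 1 - j) : ℚ))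
      + ∑ t ∈ Finset.range (s + 1),
          (catalan (t + 1) : ℚ) * ((m.choose (2 * t + 1) : ℚ) *
            ((m - 1 - 2 * t).choose (s - t) : ℚ)) := by
  rw [Finset.sum_range_succ' (fun j => ((m + 1).choose (2 * j) : ℚ) * (catalan j : ℚ) *
        (((m + 1) - 2 * j).choose (s + 1 - j) : ℚ)) (s + 1),
      Finset.sum_range_succ' (fun j => (m.choose (2 * j) : ℚ) * (catalan j : ℚ) *
        (((m + 1) - 2 * j).choose (s + 1 - j) : ℚ)) (s + 1)]
  have h1 : ∀ t ∈ Finset.range (s + 1),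
      ((m + 1).choose (2 * (t + 1)) : ℚ) * (catalan (t + 1) : ℚ) *
          (((m + 1) - 2 * (t + 1)).choose (s + 1 - (t + 1)) : ℚ)
        = (m.choose (2 * (t + 1)) : ℚ) * (catalan (t + 1) : ℚ) *
            (((m + 1) - 2 * (t + 1)).choose (s + 1 - (t + 1)) : ℚ)
          + (catalan (t + 1) : ℚ) * ((m.choose (2 * t + 1) : ℚ) *
            ((m - 1 - 2 * t).choose (s - t) : ℚ)) := by
    intro t _
    rw [show 2 * (t + 1) = (2 * t + 1) + 1 by omega, Nat.choose_succ_succ' (m) (2 * t + 1),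
        show (m + 1) - ((2 * t + 1) + 1) = m - 1 - 2 * t by omega,
        show s + 1 - (t + 1) = s - t by omega]
    push_cast
    ring
  rw [Finset.sum_congr rfl h1, Finset.sum_add_distrib]
  simp only [Nat.mul_zero, Nat.choose_zero_right]
  ring

/-- Pascal splitting of the bottom binomial in Coker form. -/
lemma hB (m s : ℕ) :
    (∑ j ∈ Finset.range (s + 2), (m.choose (2 * j) : ℚ) * (catalan j : ℚ) *
        (((m + 1) - 2 * j).choose (s + 1 - j) : ℚ))
    = nar m (s + 1) + nar m s := by
  rw [K3 m (s + 1), K3 m s]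
  rw [Finset.sum_range_succ (fun j => (m.choose (2 * j) : ℚ) * (catalan j : ℚ) *
        (((m + 1) - 2 * j).choose (s + 1 - j) : ℚ)) (s + 1),
      Finset.sum_range_succ (fun j => (m.choose (2 * j) : ℚ) * (catalan j : ℚ) *
        ((m - 2 * j).choose (s + 1 - j) : ℚ)) (s + 1)]
  have htop : ((m + 1) - 2 * (s + 1)).choose (s + 1 - (s + 1)) = (1 : ℕ) := by
    rw [show s + 1 - (s + 1) = 0 by omega, Nat.choose_zero_right]
  have htop2 : (m - 2 * (s + 1)).choose (s + 1 - (s + 1)) = (1 : ℕ) := by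
    rw [show s + 1 - (s + 1) = 0 by omega, Nat.choose_zero_right]
  rw [htop, htop2]
  have h1 : ∀ j ∈ Finset.range (s + 1),
      (m.choose (2 * j) : ℚ) * (catalan j : ℚ) * (((m + 1) - 2 * j).choose (s + 1 - j) : ℚ)
        = (m.choose (2 * j) : ℚ) * (catalan j : ℚ) * ((m - 2 * j).choose (s + 1 - j) : ℚ)
          + (m.choose (2 * j) : ℚ) * (catalan j : ℚ) * ((m - 2 * j).choose (s - j) : ℚ) := by
    intro j hj
    simp only [Finset.mem_range] at hj
    by_cases hjm : 2 * j ≤ m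
    · rw [show (m + 1) - 2 * j = (m - 2 * j) + 1 by omega,
          show s + 1 - j = (s - j) + 1 by omega, Nat.choose_succ_succ' (m - 2 * j) (s - j),
          show (s - j) + 1 = s + 1 - j by omega]
      push_cast
      ring
    · rw [Nat.choose_eq_zero_of_lt (by omega : m < 2 * j)]
      simp
  rw [Finset.sum_congr rfl h1, Finset.sum_add_distrib]
  push_cast
  ring

/-- The main numeric identity: first-return recursion for Narayana numbers. -/
lemma M (m s : ℕ) :
    nar (m + 1) (s + 1) = nar m (s + 1) + nar m s +
      ∑ i ∈ Finset.Icc 1 m, ∑ p ∈ Finset.HasAntidiagonal.antidiagonal s, nar (i - 1) p.1 * nar (m - i) p.2 := by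
  rw [K3 (m + 1) (s + 1), hAB, hB, hDD]

end CatARecAux

/-- The recursion `Cat(Aₙ; q) = (1+q)·Cat(Aₙ₋₁; q) + q·Σᵢ₌₁ⁿ⁻¹ Cat(Aᵢ₋₁; q)·Cat(Aₙ₋ᵢ₋₁; q)`. -/
theorem catA_recursion (n : ℕ) (hn : 1 ≤ n) :
    catA n = (1 + X) * catA (n - 1) +
      X * ∑ i ∈ Finset.Icc 1 (n - 1), catA (i - 1) * catA (n - i - 1) := by
  obtain ⟨m, rfl⟩ : ∃ m, n = m + 1 := ⟨n - 1, by omega⟩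
  simp only [Nat.add_sub_cancel]
  have hsum : ∀ i ∈ Finset.Icc 1 m, catA (i - 1) * catA (m + 1 - i - 1)
      = catA (i - 1) * catA (m - i) := by
    intro i _
    rw [show m + 1 - i - 1 = m - i by omega]
  rw [Finset.sum_congr rfl hsum]
  apply Polynomial.ext
  intro k
  simp only [add_mul, one_mul, coeff_add]
  cases k with
  | zero =>
    rw [mul_coeff_zero, mul_coeff_zero, coeff_X_zero, zero_mul, zero_mul,
        CatARecAux.coeff_catA, CatARecAux.coeff_catA, CatARecAux.nar_zero, CatARecAux.nar_zero]
    norm_num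
  | succ s =>
    rw [coeff_X_mul, coeff_X_mul, CatARecAux.coeff_catA, CatARecAux.coeff_catA,
        CatARecAux.coeff_catA, finset_sum_coeff]
    have hc : ∀ i ∈ Finset.Icc 1 m, (catA (i - 1) * catA (m - i)).coeff s
        = ∑ p ∈ Finset.HasAntidiagonal.antidiagonal s, CatARecAux.nar (i - 1) p.1 * CatARecAux.nar (m - i) p.2 := by
      intro i _
      rw [coeff_mul]
      exact Finset.sum_congr rfl fun p _ => by
        rw [CatARecAux.coeff_catA, CatARecAux.coeff_catA]
    rw [Finset.sum_congr rfl hc]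
    exact CatARecAux.M m s
end

section
/- For every integer n ≥ 2, the polynomial identity Cat(D_n; q) = ((n+1)/2)·(1+q)·Cat(A_{n−1}; q) − ( (n−1)/2 + q + ((n−1)/2)·q² )·Cat(A_{n−2}; q) holds in ℚ[q]. -/
open Polynomial

/-- The type-D Catalan polynomial `Cat(Dₙ; q) = Σₖ Narₖ(Dₙ) qᵏ` (for `n ≥ 2`), where
`Narₖ(Dₙ) = C(n, k)² - (n/(n-1))·C(n-1, k)·C(n-1, k-1)` are the type-D Narayana numbers
(with `C(n-1, k-1) = 0` when `k = 0`). -/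
noncomputable def catD (n : ℕ) : Polynomial ℚ :=
  ∑ k ∈ Finset.range (n + 1),
    C (((n.choose k : ℚ)) ^ 2 -
        ((n : ℚ) / ((n : ℚ) - 1)) * ((n - 1).choose k : ℚ) *
          (if k = 0 then 0 else ((n - 1).choose (k - 1) : ℚ))) * X ^ k

lemma choose_ratio (m i : ℕ) :
    ((i : ℚ) + 1) * (m.choose (i + 1) : ℚ) = ((m : ℚ) - i) * (m.choose i : ℚ) := by
  rcases le_or_gt (i + 1) m with h | h
  · have h2 := congrArg (Nat.cast : ℕ → ℚ) (Nat.choose_succ_right_eq m i)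
    push_cast [Nat.cast_sub (show i ≤ m by omega)] at h2
    linarith
  · rcases eq_or_lt_of_le (Nat.lt_succ_iff.mp h) with h2 | h2
    · subst h2
      simp [Nat.choose_eq_zero_of_lt (Nat.lt_succ_self m)]
    · simp [Nat.choose_eq_zero_of_lt h2, Nat.choose_eq_zero_of_lt (h2.trans (Nat.lt_succ_self i))]

lemma sum_ext (f : ℕ → ℚ) (N M : ℕ) (h : N ≤ M) (h0 : ∀ k, N ≤ k → f k = 0) :
    ∑ k ∈ Finset.range N, C (f k) * X ^ k = ∑ k ∈ Finset.range M, C (f k) * X ^ k := by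
  apply Finset.sum_subset (Finset.range_subset_range.2 h)
  intro k _ hk
  rw [h0 k (by simpa using hk)]
  simp

lemma shiftX (f : ℕ → ℚ) (N : ℕ) :
    X * ∑ k ∈ Finset.range N, C (f k) * X ^ k
      = ∑ k ∈ Finset.range (N + 1), C (if k = 0 then 0 else f (k - 1)) * X ^ k := by
  rw [Finset.mul_sum, Finset.sum_range_succ']
  simp only [Nat.succ_ne_zero, if_false, Nat.add_sub_cancel, reduceIte, if_true, map_zero,
    zero_mul, add_zero, eq_self_iff_true]
  exact Finset.sum_congr rfl fun k _ => by ring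

lemma CmulSum (a : ℚ) (f : ℕ → ℚ) (N : ℕ) :
    C a * ∑ k ∈ Finset.range N, C (f k) * X ^ k
      = ∑ k ∈ Finset.range N, C (a * f k) * X ^ k := by
  rw [Finset.mul_sum]
  exact Finset.sum_congr rfl fun k _ => by rw [← mul_assoc, ← C_mul]

lemma rhs_eq (a b : ℚ) (f g : ℕ → ℚ) (N : ℕ)
    (hf : ∀ k, N + 1 ≤ k → f k = 0) (hg : ∀ k, N ≤ k → g k = 0) :
    C a * (1 + X) * (∑ k ∈ Finset.range (N + 1), C (f k) * X ^ k) -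
      (C b + X + C b * X ^ 2) * (∑ k ∈ Finset.range N, C (g k) * X ^ k) =
    ∑ k ∈ Finset.range (N + 2),
      C (a * f k + (if k = 0 then 0 else a * f (k - 1)) -
          (b * g k + ((if k = 0 then 0 else g (k - 1)) +
            (if k = 0 then 0 else if k - 1 = 0 then 0 else b * g (k - 1 - 1))))) * X ^ k := by
  have hr : C a * (1 + X) * (∑ k ∈ Finset.range (N + 1), C (f k) * X ^ k) -
      (C b + X + C b * X ^ 2) * (∑ k ∈ Finset.range N, C (g k) * X ^ k) =
      (C a * (∑ k ∈ Finset.range (N + 1), C (f k) * X ^ k) +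
        X * (C a * (∑ k ∈ Finset.range (N + 1), C (f k) * X ^ k))) -
      (C b * (∑ k ∈ Finset.range N, C (g k) * X ^ k) +
        (X * (∑ k ∈ Finset.range N, C (g k) * X ^ k) +
          X * (X * (C b * (∑ k ∈ Finset.range N, C (g k) * X ^ k))))) := by ring
  rw [hr]
  simp only [CmulSum, shiftX]
  rw [sum_ext (fun k => a * f k) (N + 1) (N + 2) (by omega)
      (fun k hk => by show a * f k = 0; rw [hf k (by omega)]; ring),
    sum_ext (fun k => b * g k) N (N + 2) (by omega)
      (fun k hk => by show b * g k = 0; rw [hg k (by omega)]; ring),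
    sum_ext (fun k => if k = 0 then 0 else g (k - 1)) (N + 1) (N + 2) (by omega)
      (fun k hk => by show (if k = 0 then (0:ℚ) else g (k - 1)) = 0; rw [if_neg (by omega), hg (k - 1) (by omega)]),
    ← Finset.sum_add_distrib, ← Finset.sum_add_distrib, ← Finset.sum_add_distrib,
    ← Finset.sum_sub_distrib]
  refine Finset.sum_congr rfl fun k _ => ?_
  simp only [C_add, C_sub]
  ring

lemma scalar2 (p j : ℕ) :
    ((p + 1 + 1).choose (j + 2) : ℚ) ^ 2 -
        ((p + 2 : ℕ) : ℚ) / (((p + 2 : ℕ) : ℚ) - 1) * ((p + 1).choose (j + 2) : ℚ) *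
          ((p + 1).choose (j + 1) : ℚ) =
      ((((p + 2 : ℕ) : ℚ) + 1) / 2 *
          (1 / (((p + 1 : ℕ) : ℚ) + 1) * ((p + 1 + 1).choose (j + 2) : ℚ) *
            ((p + 1 + 1).choose (j + 3) : ℚ)) +
        (((p + 2 : ℕ) : ℚ) + 1) / 2 *
          (1 / (((p + 1 : ℕ) : ℚ) + 1) * ((p + 1 + 1).choose (j + 1) : ℚ) *
            ((p + 1 + 1).choose (j + 2) : ℚ))) -
      ((((p + 2 : ℕ) : ℚ) - 1) / 2 *
          (1 / ((p : ℚ) + 1) * ((p + 1).choose (j + 2) : ℚ) * ((p + 1).choose (j + 3) : ℚ)) +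
        (1 / ((p : ℚ) + 1) * ((p + 1).choose (j + 1) : ℚ) * ((p + 1).choose (j + 2) : ℚ) +
          (((p + 2 : ℕ) : ℚ) - 1) / 2 *
            (1 / ((p : ℚ) + 1) * ((p + 1).choose j : ℚ) * ((p + 1).choose (j + 1) : ℚ)))) := by
  have hj1 : ((j : ℚ) + 1) ≠ 0 := by positivity
  have hj2 : ((j : ℚ) + 2) ≠ 0 := by positivity
  have hj3 : ((j : ℚ) + 3) ≠ 0 := by positivity
  have hp1 : ((p : ℚ) + 1) ≠ 0 := by positivity
  have hp2 : ((p : ℚ) + 2) ≠ 0 := by positivity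
  have e1 : ((p + 1 + 1).choose (j + 1) : ℚ) =
      ((p + 1).choose j : ℚ) + ((p + 1).choose (j + 1) : ℚ) := by
    exact_mod_cast congrArg (Nat.cast : ℕ → ℚ) (Nat.choose_succ_succ (p + 1) j)
  have e2 : ((p + 1 + 1).choose (j + 2) : ℚ) =
      ((p + 1).choose (j + 1) : ℚ) + ((p + 1).choose (j + 2) : ℚ) := by
    exact_mod_cast congrArg (Nat.cast : ℕ → ℚ) (Nat.choose_succ_succ (p + 1) (j + 1))
  have e3 : ((p + 1 + 1).choose (j + 3) : ℚ) =
      ((p + 1).choose (j + 2) : ℚ) + ((p + 1).choose (j + 3) : ℚ) := by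
    exact_mod_cast congrArg (Nat.cast : ℕ → ℚ) (Nat.choose_succ_succ (p + 1) (j + 2))
  have h1 := choose_ratio (p + 1) j
  have h2 := choose_ratio (p + 1) (j + 1)
  have h3 := choose_ratio (p + 1) (j + 2)
  push_cast at h1 h2 h3
  have hc1 : ((p + 1).choose (j + 1) : ℚ) =
      ((p : ℚ) + 1 - j) * ((p + 1).choose j : ℚ) / ((j : ℚ) + 1) := by
    rw [eq_div_iff hj1]; linarith
  have hc2 : ((p + 1).choose (j + 2) : ℚ) =
      ((p : ℚ) - j) * ((p + 1).choose (j + 1) : ℚ) / ((j : ℚ) + 2) := by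
    rw [eq_div_iff hj2]; linarith
  have hc3 : ((p + 1).choose (j + 3) : ℚ) =
      ((p : ℚ) - j - 1) * ((p + 1).choose (j + 2) : ℚ) / ((j : ℚ) + 3) := by
    rw [eq_div_iff hj3]; linarith
  rw [e1, e2, e3, hc3, hc2, hc1]
  push_cast
  rw [show ((p : ℚ) + 2) - 1 = (p : ℚ) + 1 from by ring]
  field_simp
  ring

/-- The identity
`Cat(Dₙ; q) = ((n+1)/2)(1+q)·Cat(Aₙ₋₁; q) - ((n-1)/2 + q + ((n-1)/2)q²)·Cat(Aₙ₋₂; q)`. -/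
theorem catD_from_catA (n : ℕ) (hn : 2 ≤ n) :
    catD n = C (((n : ℚ) + 1) / 2) * (1 + X) * catA (n - 1) -
      (C (((n : ℚ) - 1) / 2) + X + C (((n : ℚ) - 1) / 2) * X ^ 2) * catA (n - 2) := by
  obtain ⟨p, rfl⟩ : ∃ p, n = p + 2 := ⟨n - 2, by omega⟩
  have e1 : p + 2 - 1 = p + 1 := rfl
  have e2 : p + 2 - 2 = p := rfl
  rw [e1, e2]
  simp only [catD, catA]
  rw [e1]
  rw [rhs_eq ((((p + 2 : ℕ) : ℚ) + 1) / 2) ((((p + 2 : ℕ) : ℚ) - 1) / 2)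
      (fun k => 1 / (((p + 1 : ℕ) : ℚ) + 1) * ((p + 1 + 1).choose k : ℚ) *
        ((p + 1 + 1).choose (k + 1) : ℚ))
      (fun k => 1 / (((p : ℕ) : ℚ) + 1) * ((p + 1).choose k : ℚ) * ((p + 1).choose (k + 1) : ℚ))
      (p + 1)
      (fun k hk => by simp [Nat.choose_eq_zero_of_lt (show p + 1 + 1 < k + 1 by omega)])
      (fun k hk => by simp [Nat.choose_eq_zero_of_lt (show p + 1 < k + 1 by omega)])]
  refine Finset.sum_congr rfl fun k hk => ?_
  congr 1
  congr 1
  match k with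
  | 0 =>
    simp only [if_pos rfl]
    have hA : ((p + 1).choose 1 : ℚ) = (p : ℚ) + 1 := by push_cast [Nat.choose_one_right]; ring
    have hB : ((p + 1 + 1).choose 1 : ℚ) = (p : ℚ) + 2 := by
      push_cast [Nat.choose_one_right]; ring
    simp only [Nat.choose_zero_right, Nat.choose_self, hA, hB]
    have hp1 : ((p : ℚ) + 1) ≠ 0 := by positivity
    have hp2 : ((p : ℚ) + 2) ≠ 0 := by positivity
    push_cast
    rw [show ((p : ℚ) + 2) - 1 = (p : ℚ) + 1 from by ring]
    field_simp
    ring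
  | 1 =>
    norm_num
    have hA : ((p + 1).choose 2 : ℚ) = (p : ℚ) * ((p : ℚ) + 1) / 2 := by
      have h := choose_ratio (p + 1) 1
      push_cast [Nat.choose_one_right] at h
      rw [eq_div_iff (two_ne_zero)]
      linear_combination h
    have hB : ((p + 1 + 1).choose 2 : ℚ) = ((p : ℚ) + 1) * ((p : ℚ) + 2) / 2 := by
      have h := choose_ratio (p + 1 + 1) 1
      push_cast [Nat.choose_one_right] at h
      rw [eq_div_iff (two_ne_zero)]
      linear_combination h
    have hC : ((p + 1).choose 1 : ℚ) = (p : ℚ) + 1 := by push_cast [Nat.choose_one_right]; ring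
    have hD : ((p + 1 + 1).choose 1 : ℚ) = (p : ℚ) + 2 := by
      push_cast [Nat.choose_one_right]; ring
    simp only [Nat.choose_zero_right, hA, hB, hC, hD]
    have hp1 : ((p : ℚ) + 1) ≠ 0 := by positivity
    have hp2 : ((p : ℚ) + 2) ≠ 0 := by positivity
    push_cast
    rw [show ((p : ℚ) + 2) - 1 = (p : ℚ) + 1 from by ring]
    field_simp
    ring
  | (j + 2) => exact scalar2 p j
end

section
/- For every integer n ≥ 1, the polynomial identity Σ_{i=1}^{n} Cat(A_{i−1}; q)·Cat(B_{n−i}; q) = n·Cat(A_{n−1}; q) holds in ℚ[q]. -/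
open Polynomial

/-- The type-B Catalan polynomial `Cat(Bₙ; q) = Σₖ C(n, k)² qᵏ`. -/
noncomputable def catB (n : ℕ) : Polynomial ℚ :=
  ∑ k ∈ Finset.range (n + 1), C ((n.choose k : ℚ) ^ 2) * X ^ k

namespace CatAux

open Finset

/-- gap-`r` type-B coefficients -/
def bb (r m k : ℕ) : ℚ := (m.choose k : ℚ) * (m.choose (k + r) : ℚ)

/-- closed-form coefficients of the convolution -/
def rrc (r p k : ℕ) : ℚ := (p.choose k : ℚ) * (p.choose (k + r + 1) : ℚ)

def aa (n k : ℕ) : ℚ :=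
  (1 / ((n : ℚ) + 1)) * ((n + 1).choose k : ℚ) * ((n + 1).choose (k + 1) : ℚ)

noncomputable def Br (r m : ℕ) : Polynomial ℚ := ∑ k ∈ range (m + 1), C (bb r m k) * X ^ k

noncomputable def Rr (r p : ℕ) : Polynomial ℚ := ∑ k ∈ range (p + 1), C (rrc r p k) * X ^ k

lemma coeff_sumCX (N : ℕ) (c : ℕ → ℚ) (j : ℕ) :
    (∑ k ∈ range N, C (c k) * X ^ k).coeff j = if j < N then c j else 0 := by
  rw [finset_sum_coeff]
  simp only [coeff_C_mul, coeff_X_pow, mul_ite, mul_one, mul_zero]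
  rw [Finset.sum_ite_eq (range N) j c]
  simp [mem_range]

lemma coeff_Br (r m j : ℕ) : (Br r m).coeff j = bb r m j := by
  rw [Br, coeff_sumCX]
  split_ifs with h
  · rfl
  · have : m.choose j = 0 := Nat.choose_eq_zero_of_lt (by omega)
    simp [bb, this]

lemma coeff_Rr (r p j : ℕ) : (Rr r p).coeff j = rrc r p j := by
  rw [Rr, coeff_sumCX]
  split_ifs with h
  · rfl
  · have : p.choose j = 0 := Nat.choose_eq_zero_of_lt (by omega)
    simp [rrc, this]

lemma coeff_catA (n j : ℕ) : (catA n).coeff j = aa n j := by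
  rw [catA, coeff_sumCX]
  split_ifs with h
  · rfl
  · have : (n + 1).choose (j + 1) = 0 := Nat.choose_eq_zero_of_lt (by omega)
    simp [aa, this]

lemma catB_eq_Br (m : ℕ) : catB m = Br 0 m := by
  ext j
  rw [coeff_Br, catB, coeff_sumCX]
  split_ifs with h
  · simp [bb]; ring
  · have : m.choose j = 0 := Nat.choose_eq_zero_of_lt (by omega)
    simp [bb, this]

lemma pascalQ (n k : ℕ) : (((n + 1).choose (k + 1) : ℕ) : ℚ) = (n.choose k : ℚ) + (n.choose (k + 1) : ℚ) := by
  exact_mod_cast Nat.choose_succ_succ n k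

/-- `(k+1)·C(n,k+1) = (n-k)·C(n,k)` over ℚ, valid for all `n k`. -/
lemma u1 (n k : ℕ) : ((k : ℚ) + 1) * (n.choose (k + 1) : ℚ) = ((n : ℚ) - k) * (n.choose k : ℚ) := by
  rcases le_or_gt (k + 1) n with h | h
  · have h2 := Nat.choose_succ_right_eq n k
    have h3 : ((n.choose (k + 1) * (k + 1) : ℕ) : ℚ) = ((n.choose k * (n - k) : ℕ) : ℚ) := by
      exact_mod_cast congrArg (Nat.cast : ℕ → ℚ) h2
    have hk : k ≤ n := by omega
    push_cast [Nat.cast_sub hk] at h3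
    linarith
  · have hz : n.choose (k + 1) = 0 := Nat.choose_eq_zero_of_lt h
    rcases eq_or_lt_of_le (Nat.lt_succ_iff.mp h) with he | hlt
    · subst he; simp [hz]
    · have : n.choose k = 0 := Nat.choose_eq_zero_of_lt hlt
      simp [hz, this]

/-- the key single-term identity:
`(p+1)·(C(p,k+1)² − C(p,k)·C(p,k+2)) = C(p+1,k+1)·C(p+1,k+2)` (with Pascal applied to RHS). -/
lemma dagger (p k : ℕ) :
    ((p : ℚ) + 1) * ((p.choose (k + 1) : ℚ) ^ 2 - (p.choose k : ℚ) * (p.choose (k + 2) : ℚ))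
      = ((p.choose k : ℚ) + (p.choose (k + 1) : ℚ)) *
        ((p.choose (k + 1) : ℚ) + (p.choose (k + 2) : ℚ)) := by
  rcases lt_or_ge k p with h | h
  · have r1 := u1 p k
    have r2 := u1 p (k + 1)
    push_cast at r2
    have hpk : (p : ℚ) - k ≠ 0 := by
      have : (k : ℚ) < p := by exact_mod_cast h
      intro hcon; nlinarith
    have hk2 : (k : ℚ) + 2 ≠ 0 := by positivity
    have ha : (p.choose k : ℚ) = ((k : ℚ) + 1) * (p.choose (k + 1) : ℚ) / ((p : ℚ) - k) := by
      field_simp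
      linarith
    have hc : (p.choose (k + 2) : ℚ)
        = ((p : ℚ) - k - 1) * (p.choose (k + 1) : ℚ) / ((k : ℚ) + 2) := by
      field_simp
      nlinarith [r2]
    rw [ha, hc]
    field_simp
    ring
  · have hb : p.choose (k + 1) = 0 := Nat.choose_eq_zero_of_lt (by omega)
    have hc : p.choose (k + 2) = 0 := Nat.choose_eq_zero_of_lt (by omega)
    simp [hb, hc]

lemma Br_succ_gap (r m : ℕ) :
    Br (r + 1) (m + 1) = Br (r + 1) m + Br r m + X * Br (r + 1) m + X * Br (r + 2) m := by
  ext j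
  rcases j with _ | k
  · simp only [coeff_add, mul_coeff_zero, coeff_X_zero, zero_mul, add_zero, coeff_Br]
    simp only [bb, Nat.choose_zero_right, Nat.cast_one, Nat.zero_add]
    rw [pascalQ m r]
    ring
  · simp only [coeff_add, coeff_X_mul, coeff_Br]
    simp only [bb]
    have e1 : k + 1 + (r + 1) = (k + r + 1) + 1 := by omega
    have e2 : k + (r + 1) = (k + r) + 1 := by omega
    have e3 : k + (r + 2) = (k + r + 1) + 1 := by omega
    have e4 : k + 1 + r = (k + r) + 1 := by omega
    rw [e1, e2, e3, e4, pascalQ m k, pascalQ m (k + r + 1)]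
    ring

lemma Br_succ_zero (m : ℕ) :
    Br 0 (m + 1) = Br 0 m + X * Br 1 m + X * Br 1 m + X * Br 0 m := by
  ext j
  rcases j with _ | k
  · simp only [coeff_add, mul_coeff_zero, coeff_X_zero, zero_mul, add_zero, coeff_Br]
    simp [bb]
  · simp only [coeff_add, coeff_X_mul, coeff_Br]
    simp only [bb, Nat.add_zero]
    rw [pascalQ m k]
    ring

lemma Rr_succ_gap (r p : ℕ) :
    Rr (r + 1) (p + 1) = Rr (r + 1) p + Rr r p + X * Rr (r + 1) p + X * Rr (r + 2) p := by
  ext j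
  rcases j with _ | k
  · simp only [coeff_add, mul_coeff_zero, coeff_X_zero, zero_mul, add_zero, coeff_Rr]
    simp only [rrc, Nat.choose_zero_right, Nat.cast_one, Nat.zero_add]
    rw [pascalQ p (r + 1)]
    ring
  · simp only [coeff_add, coeff_X_mul, coeff_Rr]
    simp only [rrc]
    have e1 : k + 1 + (r + 1) + 1 = (k + r + 2) + 1 := by omega
    have e2 : k + (r + 1) + 1 = (k + r + 1) + 1 := by omega
    have e3 : k + (r + 2) + 1 = (k + r + 2) + 1 := by omega
    have e4 : k + r + 1 = (k + r) + 1 := by omega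
    rw [e1, e2, e3, e4, pascalQ p k, pascalQ p (k + r + 2)]
    ring

lemma Rr_succ_zero (p : ℕ) :
    Rr 0 (p + 1) = catA p + Rr 0 p + X * Rr 1 p + X * Rr 1 p + X * Rr 0 p := by
  ext j
  rcases j with _ | k
  · simp only [coeff_add, mul_coeff_zero, coeff_X_zero, zero_mul, add_zero, coeff_Rr, coeff_catA]
    simp only [rrc, aa, Nat.choose_zero_right, Nat.cast_one, Nat.zero_add]
    have hp : (p : ℚ) + 1 ≠ 0 := by positivity
    simp only [Nat.choose_one_right]
    push_cast
    field_simp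
    ring
  · simp only [coeff_add, coeff_X_mul, coeff_Rr, coeff_catA]
    simp only [rrc, aa]
    have e1 : k + 1 + 0 + 1 = (k + 1) + 1 := by omega
    have e2 : k + 0 + 1 = k + 1 := by omega
    have hd := dagger p k
    have hp : (p : ℚ) + 1 ≠ 0 := by positivity
    have haa : (1 / ((p : ℚ) + 1)) * ((p + 1).choose (k + 1) : ℚ) * ((p + 1).choose (k + 1 + 1) : ℚ)
        = (p.choose (k + 1) : ℚ) ^ 2 - (p.choose k : ℚ) * (p.choose (k + 2) : ℚ) := by
      rw [show k + 1 + 1 = (k + 1) + 1 from rfl, pascalQ p k, pascalQ p (k + 1)]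
      field_simp
      linarith [hd]
    rw [e1, e2, haa, pascalQ p k, pascalQ p (k + 1)]
    ring

lemma Br_zero_zero : Br 0 0 = 1 := by
  ext j
  rw [coeff_Br]
  rcases j with _ | k
  · simp [bb]
  · have : (0 : ℕ).choose (k + 1) = 0 := Nat.choose_eq_zero_of_lt (by omega)
    simp [bb, this, Polynomial.coeff_one]

lemma Br_succ_gap_zero (r : ℕ) : Br (r + 1) 0 = 0 := by
  ext j
  rw [coeff_Br]
  rcases j with _ | k
  · have : (0 : ℕ).choose (0 + (r + 1)) = 0 := Nat.choose_eq_zero_of_lt (by omega)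
    simp [bb, this]
  · have : (0 : ℕ).choose (k + 1) = 0 := Nat.choose_eq_zero_of_lt (by omega)
    simp [bb, this]

lemma Rr_zero_p (r : ℕ) : Rr r 0 = 0 := by
  ext j
  rw [coeff_Rr]
  rcases j with _ | k
  · have : (0 : ℕ).choose (0 + r + 1) = 0 := Nat.choose_eq_zero_of_lt (by omega)
    simp [rrc, this]
  · have : (0 : ℕ).choose (k + 1) = 0 := Nat.choose_eq_zero_of_lt (by omega)
    simp [rrc, this]

/-- the master convolution identity for every gap `r`. -/
lemma gen (p : ℕ) : ∀ r : ℕ, ∑ i ∈ Icc 1 p, catA (i - 1) * Br r (p - i) = Rr r p := by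
  induction p with
  | zero =>
    intro r
    rw [show (Icc 1 0 : Finset ℕ) = ∅ from rfl]
    rw [Rr_zero_p]
    simp
  | succ p ih =>
    intro r
    rw [Finset.sum_Icc_succ_top (by omega : 1 ≤ p + 1)]
    rcases r with _ | r
    · have hstep : ∑ i ∈ Icc 1 p, catA (i - 1) * Br 0 (p + 1 - i)
          = (∑ i ∈ Icc 1 p, catA (i - 1) * Br 0 (p - i))
            + (X * ∑ i ∈ Icc 1 p, catA (i - 1) * Br 1 (p - i)
            + (X * ∑ i ∈ Icc 1 p, catA (i - 1) * Br 1 (p - i)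
            + X * ∑ i ∈ Icc 1 p, catA (i - 1) * Br 0 (p - i))) := by
        simp only [Finset.mul_sum]
        rw [← Finset.sum_add_distrib, ← Finset.sum_add_distrib, ← Finset.sum_add_distrib]
        refine Finset.sum_congr rfl fun i hi => ?_
        have hip : i ≤ p := (Finset.mem_Icc.mp hi).2
        rw [show p + 1 - i = (p - i) + 1 from by omega, Br_succ_zero]
        ring
      rw [hstep, ih 0, ih 1, Nat.add_sub_cancel, Nat.sub_self, Br_zero_zero,
        Rr_succ_zero]
      ring
    · have hstep : ∑ i ∈ Icc 1 p, catA (i - 1) * Br (r + 1) (p + 1 - i)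
          = (∑ i ∈ Icc 1 p, catA (i - 1) * Br (r + 1) (p - i))
            + ((∑ i ∈ Icc 1 p, catA (i - 1) * Br r (p - i))
            + (X * ∑ i ∈ Icc 1 p, catA (i - 1) * Br (r + 1) (p - i)
            + X * ∑ i ∈ Icc 1 p, catA (i - 1) * Br (r + 2) (p - i))) := by
        simp only [Finset.mul_sum]
        rw [← Finset.sum_add_distrib, ← Finset.sum_add_distrib, ← Finset.sum_add_distrib]
        refine Finset.sum_congr rfl fun i hi => ?_
        have hip : i ≤ p := (Finset.mem_Icc.mp hi).2
        rw [show p + 1 - i = (p - i) + 1 from by omega, Br_succ_gap]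
        ring
      rw [hstep, ih (r + 1), ih r, ih (r + 2), Nat.add_sub_cancel, Nat.sub_self,
        Br_succ_gap_zero, Rr_succ_gap]
      ring

lemma Rr_zero_eq (m : ℕ) : Rr 0 (m + 1) = ((m + 1 : ℕ) : Polynomial ℚ) * catA m := by
  ext j
  have hc : (((m + 1 : ℕ) : Polynomial ℚ) * catA m).coeff j
      = ((m + 1 : ℕ) : ℚ) * (catA m).coeff j := by
    rw [← Polynomial.C_eq_natCast, coeff_C_mul]
  rw [coeff_Rr, hc, coeff_catA]
  simp only [rrc, aa]
  have hp : (m : ℚ) + 1 ≠ 0 := by positivity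
  push_cast
  rw [show j + 0 + 1 = j + 1 from by omega]
  field_simp

end CatAux

/-- The identity `Σᵢ₌₁ⁿ Cat(Aᵢ₋₁; q)·Cat(Bₙ₋ᵢ; q) = n·Cat(Aₙ₋₁; q)`. -/
theorem catA_catB_convolution (n : ℕ) (hn : 1 ≤ n) :
    ∑ i ∈ Finset.Icc 1 n, catA (i - 1) * catB (n - i) = (n : Polynomial ℚ) * catA (n - 1) := by
  obtain ⟨m, rfl⟩ : ∃ m, n = m + 1 := ⟨n - 1, by omega⟩
  calc ∑ i ∈ Finset.Icc 1 (m + 1), catA (i - 1) * catB (m + 1 - i)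
      = ∑ i ∈ Finset.Icc 1 (m + 1), catA (i - 1) * CatAux.Br 0 (m + 1 - i) := by
        refine Finset.sum_congr rfl fun i _ => by rw [CatAux.catB_eq_Br]
    _ = CatAux.Rr 0 (m + 1) := CatAux.gen (m + 1) 0
    _ = ((m + 1 : ℕ) : Polynomial ℚ) * catA m := CatAux.Rr_zero_eq m
    _ = ((m + 1 : ℕ) : Polynomial ℚ) * catA (m + 1 - 1) := by rw [Nat.add_sub_cancel]
end

section
/- For every integer n ≥ 1 and every 0 ≤ k ≤ n, the number of k-element antichains in the root poset of type A_n that contain no simple root equals the number of (n−k)-element antichains in the root poset of type A_n that have full support. -/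
/-- A positive root of type Aₙ: an interval `[i, j]` with `1 ≤ i ≤ j ≤ n`. -/
def ARoot (n : ℕ) : Type := {p : ℕ × ℕ // 1 ≤ p.1 ∧ p.1 ≤ p.2 ∧ p.2 ≤ n}

/-- The root poset order of type Aₙ: containment of intervals. -/
def aLe (n : ℕ) (x y : ARoot n) : Prop := y.1.1 ≤ x.1.1 ∧ x.1.2 ≤ y.1.2

/-- `x` is a simple root of type Aₙ: a singleton interval. -/
def aSimple (n : ℕ) (x : ARoot n) : Prop := x.1.1 = x.1.2

/-- A set `A` of type-Aₙ roots has full support: the union of its intervals is `{1, …, n}`. -/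
def aFullSupport (n : ℕ) (A : Finset (ARoot n)) : Prop :=
  ∀ m : ℕ, 1 ≤ m → m ≤ n → ∃ x ∈ A, x.1.1 ≤ m ∧ m ≤ x.1.2

namespace AntiAux

instance (n : ℕ) : DecidableEq (ARoot n) :=
  fun _ _ => decidable_of_iff _ Subtype.ext_iff.symm

lemma antichain_lt {n : ℕ} {A : Finset (ARoot n)} (hA : IsAntichain (aLe n) (A : Set (ARoot n)))
    {x y : ARoot n} (hx : x ∈ A) (hy : y ∈ A) (hxy : x ≠ y) :
    (x.1.1 < y.1.1 ∧ x.1.2 < y.1.2) ∨ (y.1.1 < x.1.1 ∧ y.1.2 < x.1.2) := by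
  have h1 : ¬ (y.1.1 ≤ x.1.1 ∧ x.1.2 ≤ y.1.2) :=
    hA (Finset.mem_coe.mpr hx) (Finset.mem_coe.mpr hy) hxy
  have h2 : ¬ (x.1.1 ≤ y.1.1 ∧ y.1.2 ≤ x.1.2) :=
    hA (Finset.mem_coe.mpr hy) (Finset.mem_coe.mpr hx) hxy.symm
  omega

lemma left_injOn {n : ℕ} {A : Finset (ARoot n)} (hA : IsAntichain (aLe n) (A : Set (ARoot n))) :
    Set.InjOn (fun r : ARoot n => r.1.1) A := by
  intro x hx y hy hxy
  by_contra hne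
  rcases antichain_lt hA hx hy hne with h | h <;> simp_all

lemma right_injOn {n : ℕ} {A : Finset (ARoot n)} (hA : IsAntichain (aLe n) (A : Set (ARoot n))) :
    Set.InjOn (fun r : ARoot n => r.1.2) A := by
  intro x hx y hy hxy
  by_contra hne
  rcases antichain_lt hA hx hy hne with h | h <;> simp_all

/-- Sequence data for an antichain. -/
def SeqP (n l : ℕ) (fg : (Fin l → ℕ) × (Fin l → ℕ)) : Prop :=
  StrictMono fg.1 ∧ StrictMono fg.2 ∧ (∀ i, 1 ≤ fg.1 i) ∧ (∀ i, fg.2 i ≤ n) ∧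
    ∀ i, fg.1 i ≤ fg.2 i

def Seq (n l : ℕ) : Type := {fg : (Fin l → ℕ) × (Fin l → ℕ) // SeqP n l fg}

def buildA (n l : ℕ) (x : Seq n l) : Finset (ARoot n) :=
  Finset.univ.image (fun i => (⟨(x.1.1 i, x.1.2 i),
    ⟨x.2.2.2.1 i, x.2.2.2.2.2 i, x.2.2.2.2.1 i⟩⟩ : ARoot n))

lemma mem_buildA {n l : ℕ} {x : Seq n l} {r : ARoot n} :
    r ∈ buildA n l x ↔ ∃ i, r.1.1 = x.1.1 i ∧ r.1.2 = x.1.2 i := by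
  unfold buildA
  constructor
  · intro hr
    rcases Finset.mem_image.mp hr with ⟨i, _, rfl⟩
    exact ⟨i, rfl, rfl⟩
  · rintro ⟨i, h1, h2⟩
    apply Finset.mem_image.mpr
    refine ⟨i, Finset.mem_univ _, ?_⟩
    apply Subtype.ext
    exact (Prod.ext h1.symm h2.symm)

lemma buildA_antichain (n l : ℕ) (x : Seq n l) :
    IsAntichain (aLe n) ((buildA n l x : Finset (ARoot n)) : Set (ARoot n)) := by
  rintro a ha b hb hne hle
  rcases mem_buildA.mp (Finset.mem_coe.mp ha) with ⟨i, hi1, hi2⟩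
  rcases mem_buildA.mp (Finset.mem_coe.mp hb) with ⟨j, hj1, hj2⟩
  have hij : i ≠ j := by
    rintro rfl
    exact hne (Subtype.ext (Prod.ext (hi1.trans hj1.symm) (hi2.trans hj2.symm)))
  have hle' : b.1.1 ≤ a.1.1 ∧ a.1.2 ≤ b.1.2 := hle
  rcases lt_or_gt_of_ne hij with h | h
  · have h1 := x.2.1 h; have h2 := x.2.2.1 h; omega
  · have h1 := x.2.1 h; have h2 := x.2.2.1 h; omega

lemma buildA_inj (n l : ℕ) (x : Seq n l) :
    Function.Injective (fun i => (⟨(x.1.1 i, x.1.2 i),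
      ⟨x.2.2.2.1 i, x.2.2.2.2.2 i, x.2.2.2.2.1 i⟩⟩ : ARoot n)) := by
  intro i j hij
  have : x.1.1 i = x.1.1 j := congrArg (fun r : ARoot n => r.1.1) hij
  exact x.2.1.injective this

lemma buildA_card (n l : ℕ) (x : Seq n l) : (buildA n l x).card = l := by
  rw [buildA]
  exact (Finset.card_image_of_injective _ (buildA_inj n l x)).trans (by rw [Finset.card_univ,
    Fintype.card_fin])

lemma buildA_image_left (n l : ℕ) (x : Seq n l) :
    (buildA n l x).image (fun r : ARoot n => r.1.1) = Finset.univ.image x.1.1 := by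
  rw [buildA]
  exact Finset.image_image.trans rfl

lemma buildA_image_right (n l : ℕ) (x : Seq n l) :
    (buildA n l x).image (fun r : ARoot n => r.1.2) = Finset.univ.image x.1.2 := by
  rw [buildA]
  exact Finset.image_image.trans rfl


lemma card_image_left {n l : ℕ} {A : Finset (ARoot n)}
    (hA : IsAntichain (aLe n) (A : Set (ARoot n))) (hc : A.card = l) :
    (A.image (fun r : ARoot n => r.1.1)).card = l := by
  rw [Finset.card_image_of_injOn (left_injOn hA), hc]

lemma card_image_right {n l : ℕ} {A : Finset (ARoot n)}
    (hA : IsAntichain (aLe n) (A : Set (ARoot n))) (hc : A.card = l) :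
    (A.image (fun r : ARoot n => r.1.2)).card = l := by
  rw [Finset.card_image_of_injOn (right_injOn hA), hc]

lemma enum_mem {n l : ℕ} {A : Finset (ARoot n)}
    (hA : IsAntichain (aLe n) (A : Set (ARoot n))) (hc : A.card = l)
    (hs : (A.image (fun r : ARoot n => r.1.1)).card = l)
    (ht : (A.image (fun r : ARoot n => r.1.2)).card = l) (i : Fin l) :
    ∃ r ∈ A, r.1.1 = (A.image (fun r : ARoot n => r.1.1)).orderEmbOfFin hs i ∧
      r.1.2 = (A.image (fun r : ARoot n => r.1.2)).orderEmbOfFin ht i := by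
  set f := (A.image (fun r : ARoot n => r.1.1)).orderEmbOfFin hs with hf
  set g := (A.image (fun r : ARoot n => r.1.2)).orderEmbOfFin ht with hg
  have exu : ∀ j : Fin l, ∃! r, r ∈ A ∧ r.1.2 = g j := by
    intro j
    have hmem : g j ∈ A.image (fun r : ARoot n => r.1.2) := Finset.orderEmbOfFin_mem _ ht j
    rcases Finset.mem_image.mp hmem with ⟨r, hrA, hr⟩
    refine ⟨r, ⟨hrA, hr⟩, ?_⟩
    rintro r' ⟨hr'A, hr'⟩
    exact right_injOn hA hr'A hrA (hr'.trans hr.symm)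
  set e : Fin l → ARoot n := fun j => Finset.choose _ A (exu j) with he
  have he_mem : ∀ j, e j ∈ A := fun j => Finset.choose_mem _ A (exu j)
  have he_prop : ∀ j, (e j).1.2 = g j := fun j => Finset.choose_property _ A (exu j)
  have hmono : StrictMono (fun j => (e j).1.1) := by
    intro a b hab
    have hgab : g a < g b := (Finset.orderEmbOfFin _ ht).strictMono hab
    have hne : e a ≠ e b := by
      intro hconl
      rw [← he_prop a, ← he_prop b, hconl] at hgab
      exact lt_irrefl _ hgab
    rcases antichain_lt hA (he_mem a) (he_mem b) hne with h | h
    · exact h.1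
    · rw [he_prop a, he_prop b] at h; omega
  have huniq : (fun j => (e j).1.1) = f :=
    Finset.orderEmbOfFin_unique hs
      (fun j => Finset.mem_image.mpr ⟨e j, he_mem j, rfl⟩) hmono
  exact ⟨e i, he_mem i, (congrFun huniq i), he_prop i⟩

def toSeq (n l : ℕ) (A : Finset (ARoot n)) (hA : IsAntichain (aLe n) (A : Set (ARoot n)))
    (hc : A.card = l) : Seq n l :=
  ⟨((A.image (fun r : ARoot n => r.1.1)).orderEmbOfFin (card_image_left hA hc),
    (A.image (fun r : ARoot n => r.1.2)).orderEmbOfFin (card_image_right hA hc)),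
   (Finset.orderEmbOfFin _ _).strictMono,
   (Finset.orderEmbOfFin _ _).strictMono,
   by
     intro i
     rcases enum_mem hA hc (card_image_left hA hc) (card_image_right hA hc) i with
       ⟨r, _, h1, _⟩
     have h := r.2.1
     rw [h1] at h
     exact h,
   by
     intro i
     rcases enum_mem hA hc (card_image_left hA hc) (card_image_right hA hc) i with
       ⟨r, _, _, h2⟩
     have h := r.2.2.2
     rw [h2] at h
     exact h,
   by
     intro i
     rcases enum_mem hA hc (card_image_left hA hc) (card_image_right hA hc) i with
       ⟨r, _, h1, h2⟩
     have h := r.2.2.1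
     rw [h1, h2] at h
     exact h⟩

lemma buildA_toSeq (n l : ℕ) (A : Finset (ARoot n))
    (hA : IsAntichain (aLe n) (A : Set (ARoot n))) (hc : A.card = l) :
    buildA n l (toSeq n l A hA hc) = A := by
  apply Finset.eq_of_subset_of_card_le
  · intro r hr
    rcases mem_buildA.mp hr with ⟨i, h1, h2⟩
    rcases enum_mem hA hc (card_image_left hA hc) (card_image_right hA hc) i with
      ⟨r', hr', h1', h2'⟩
    have : r = r' := Subtype.ext (Prod.ext (by rw [h1, h1']; rfl) (by rw [h2, h2']; rfl))
    rwa [this]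
  · rw [hc, buildA_card]

lemma toSeq_buildA (n l : ℕ) (x : Seq n l)
    (hA : IsAntichain (aLe n) ((buildA n l x : Finset (ARoot n)) : Set (ARoot n)))
    (hc : (buildA n l x).card = l) :
    toSeq n l (buildA n l x) hA hc = x := by
  apply Subtype.ext
  apply Prod.ext
  · symm
    exact Finset.orderEmbOfFin_unique (card_image_left hA hc)
      (fun i => by
        rw [buildA_image_left]
        exact Finset.mem_image.mpr ⟨i, Finset.mem_univ _, rfl⟩) x.2.1
  · symm
    exact Finset.orderEmbOfFin_unique (card_image_right hA hc)
      (fun i => by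
        rw [buildA_image_right]
        exact Finset.mem_image.mpr ⟨i, Finset.mem_univ _, rfl⟩) x.2.2.1

def antiEquivP (n l : ℕ) (P : Finset (ARoot n) → Prop) (Q : Seq n l → Prop)
    (hPQ : ∀ x : Seq n l, P (buildA n l x) ↔ Q x) :
    {A : Finset (ARoot n) // IsAntichain (aLe n) (A : Set (ARoot n)) ∧ A.card = l ∧ P A} ≃
      {x : Seq n l // Q x} where
  toFun A := ⟨toSeq n l A.1 A.2.1 A.2.2.1, by
    have h := hPQ (toSeq n l A.1 A.2.1 A.2.2.1)
    rw [buildA_toSeq] at h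
    exact h.mp A.2.2.2⟩
  invFun x := ⟨buildA n l x.1, buildA_antichain n l x.1, buildA_card n l x.1,
    (hPQ x.1).mpr x.2⟩
  left_inv A := Subtype.ext (buildA_toSeq n l A.1 A.2.1 A.2.2.1)
  right_inv x := Subtype.ext (toSeq_buildA n l x.1 (buildA_antichain n l x.1)
    (buildA_card n l x.1))



def Dom (s t : Finset ℕ) : Prop :=
  ∀ x : ℕ, (t.filter (fun z => z ≤ x)).card ≤ (s.filter (fun z => z ≤ x)).card

lemma mem_range_emb {l : ℕ} {s : Finset ℕ} (hs : s.card = l) {z : ℕ} (hz : z ∈ s) :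
    ∃ j : Fin l, s.orderEmbOfFin hs j = z := by
  have : z ∈ Set.range ⇑(s.orderEmbOfFin hs) := by
    rw [Finset.range_orderEmbOfFin]
    exact hz
  exact this

lemma le_of_dom {l : ℕ} {s t : Finset ℕ} (hs : s.card = l) (ht : t.card = l) (h : Dom s t)
    (i : Fin l) : s.orderEmbOfFin hs i ≤ t.orderEmbOfFin ht i := by
  by_contra hcon
  push_neg at hcon
  set b := t.orderEmbOfFin ht i with hb
  have hlow : (i : ℕ) + 1 ≤ (t.filter (fun z => z ≤ b)).card := by
    have := Finset.card_le_card_of_injOn (s := Finset.Iic i)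
      (t := t.filter (fun z => z ≤ b)) (fun j => t.orderEmbOfFin ht j)
      (fun j hj => by
        apply Finset.mem_filter.mpr
        exact ⟨Finset.orderEmbOfFin_mem _ _ _,
          (t.orderEmbOfFin ht).monotone (Finset.mem_Iic.mp hj)⟩)
      (Set.InjOn.mono (Set.subset_univ _)
        (Set.injOn_of_injective (t.orderEmbOfFin ht).injective))
    rwa [Fin.card_Iic] at this
  have hup : (s.filter (fun z => z ≤ b)).card ≤ (i : ℕ) := by
    have hsub : s.filter (fun z => z ≤ b) ⊆ (Finset.Iio i).image (s.orderEmbOfFin hs) := by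
      intro z hz
      rcases Finset.mem_filter.mp hz with ⟨hzs, hzb⟩
      rcases mem_range_emb hs hzs with ⟨j, rfl⟩
      have : j < i := by
        by_contra hji
        push_neg at hji
        exact absurd ((s.orderEmbOfFin hs).monotone hji) (by omega)
      exact Finset.mem_image.mpr ⟨j, Finset.mem_Iio.mpr this, rfl⟩
    calc (s.filter (fun z => z ≤ b)).card ≤ ((Finset.Iio i).image (s.orderEmbOfFin hs)).card :=
          Finset.card_le_card hsub
      _ ≤ (Finset.Iio i).card := Finset.card_image_le
      _ = (i : ℕ) := Fin.card_Iio i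
  have := h b
  omega

lemma dom_of_le {l : ℕ} {s t : Finset ℕ} (hs : s.card = l) (ht : t.card = l)
    (h : ∀ i : Fin l, s.orderEmbOfFin hs i ≤ t.orderEmbOfFin ht i) : Dom s t := by
  intro x
  have key : ∀ (u : Finset ℕ) (hu : u.card = l),
      u.filter (fun z => z ≤ x) =
        (Finset.univ.filter (fun j : Fin l => u.orderEmbOfFin hu j ≤ x)).image
          (u.orderEmbOfFin hu) := by
    intro u hu
    apply Finset.Subset.antisymm
    · intro z hz
      rcases Finset.mem_filter.mp hz with ⟨hzu, hzx⟩
      rcases mem_range_emb hu hzu with ⟨j, rfl⟩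
      exact Finset.mem_image.mpr ⟨j, Finset.mem_filter.mpr ⟨Finset.mem_univ _, hzx⟩, rfl⟩
    · intro z hz
      rcases Finset.mem_image.mp hz with ⟨j, hj, rfl⟩
      exact Finset.mem_filter.mpr ⟨Finset.orderEmbOfFin_mem _ _ _,
        (Finset.mem_filter.mp hj).2⟩
  rw [key s hs, key t ht,
    Finset.card_image_of_injective _ (s.orderEmbOfFin hs).injective,
    Finset.card_image_of_injective _ (t.orderEmbOfFin ht).injective]
  apply Finset.card_le_card
  intro j hj
  rcases Finset.mem_filter.mp hj with ⟨_, hjx⟩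
  exact Finset.mem_filter.mpr ⟨Finset.mem_univ _, le_trans (h j) hjx⟩

def PairP (n l : ℕ) (p : Finset ℕ × Finset ℕ) : Prop :=
  p.1 ⊆ Finset.Icc 1 (n-1) ∧ p.2 ⊆ Finset.Icc 1 (n-1) ∧ p.1.card = l ∧ p.2.card = l ∧
    Dom p.1 p.2

def PairT (n l : ℕ) : Type := {p : Finset ℕ × Finset ℕ // PairP n l p}

def pcompl (n : ℕ) (p : Finset ℕ × Finset ℕ) : Finset ℕ × Finset ℕ :=
  (Finset.Icc 1 (n-1) \ p.2, Finset.Icc 1 (n-1) \ p.1)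

lemma card_I (n : ℕ) : (Finset.Icc 1 (n-1)).card = n - 1 := by
  rw [Nat.card_Icc]
  omega

lemma filter_sdiff (a b : Finset ℕ) (q : ℕ → Prop) [DecidablePred q] :
    (a \ b).filter q = a.filter q \ b.filter q := by
  ext z
  simp only [Finset.mem_filter, Finset.mem_sdiff]
  tauto

lemma pairP_compl {n l l' : ℕ} {p : Finset ℕ × Finset ℕ} (hl' : l' = n - 1 - l)
    (hp : PairP n l p) : PairP n l' (pcompl n p) := by
  obtain ⟨h1, h2, hc1, hc2, hdom⟩ := hp
  unfold pcompl
  refine ⟨Finset.sdiff_subset, Finset.sdiff_subset, ?_, ?_, ?_⟩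
  · rw [Finset.card_sdiff_of_subset h2, card_I, hc2, hl']
  · rw [Finset.card_sdiff_of_subset h1, card_I, hc1, hl']
  · intro x
    show ((Finset.Icc 1 (n-1) \ p.1).filter _).card ≤ ((Finset.Icc 1 (n-1) \ p.2).filter _).card
    rw [filter_sdiff, filter_sdiff, Finset.card_sdiff_of_subset (Finset.filter_subset_filter _ h1),
      Finset.card_sdiff_of_subset (Finset.filter_subset_filter _ h2)]
    exact Nat.sub_le_sub_left (hdom x) _

def complEquiv (n l : ℕ) (hl : l ≤ n - 1) : PairT n l ≃ PairT n (n - 1 - l) where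
  toFun p := ⟨pcompl n p.1, pairP_compl rfl p.2⟩
  invFun q := ⟨pcompl n q.1, pairP_compl (by omega) q.2⟩
  left_inv p := by
    apply Subtype.ext
    show pcompl n (pcompl n p.1) = p.1
    unfold pcompl
    exact Prod.ext (Finset.sdiff_sdiff_eq_self p.2.1) (Finset.sdiff_sdiff_eq_self p.2.2.1)
  right_inv q := by
    apply Subtype.ext
    show pcompl n (pcompl n q.1) = q.1
    unfold pcompl
    exact Prod.ext (Finset.sdiff_sdiff_eq_self q.2.1) (Finset.sdiff_sdiff_eq_self q.2.2.1)


section SP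
variable (n l : ℕ)

lemma card_image_univ {α : Type*} [DecidableEq α] {f : Fin l → α} (hf : Function.Injective f) :
    (Finset.univ.image f).card = l := by
  rw [Finset.card_image_of_injective _ hf, Finset.card_univ, Fintype.card_fin]

lemma emb_image_univ {f : Fin l → ℕ} (hf : StrictMono f) :
    ⇑((Finset.univ.image f).orderEmbOfFin (card_image_univ l hf.injective)) = f :=
  (Finset.orderEmbOfFin_unique _ (fun i => Finset.mem_image.mpr ⟨i, Finset.mem_univ _, rfl⟩)
    hf).symm

lemma image_emb_univ {s : Finset ℕ} (hs : s.card = l) :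
    Finset.univ.image ⇑(s.orderEmbOfFin hs) = s := by
  apply Finset.coe_injective
  rw [Finset.coe_image, Finset.coe_univ, Set.image_univ, Finset.range_orderEmbOfFin]

def seqPairEquiv : Seq (n-1) l ≃ PairT n l where
  toFun x := ⟨(Finset.univ.image x.1.1, Finset.univ.image x.1.2), by
    obtain ⟨hm1, hm2, h1, hn1, hle⟩ := x.2
    refine ⟨?_, ?_, card_image_univ l hm1.injective, card_image_univ l hm2.injective, ?_⟩
    · intro z hz
      rcases Finset.mem_image.mp hz with ⟨i, _, rfl⟩
      exact Finset.mem_Icc.mpr ⟨h1 i, le_trans (hle i) (hn1 i)⟩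
    · intro z hz
      rcases Finset.mem_image.mp hz with ⟨i, _, rfl⟩
      exact Finset.mem_Icc.mpr ⟨le_trans (h1 i) (hle i), hn1 i⟩
    · apply dom_of_le (card_image_univ l hm1.injective) (card_image_univ l hm2.injective)
      intro i
      rw [show ⇑((Finset.univ.image x.1.1).orderEmbOfFin (card_image_univ l hm1.injective)) =
        x.1.1 from emb_image_univ l hm1,
        show ⇑((Finset.univ.image x.1.2).orderEmbOfFin (card_image_univ l hm2.injective)) =
        x.1.2 from emb_image_univ l hm2]
      exact hle i⟩
  invFun p := ⟨(⇑(p.1.1.orderEmbOfFin p.2.2.2.1), ⇑(p.1.2.orderEmbOfFin p.2.2.2.2.1)), by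
    obtain ⟨hI1, hI2, hc1, hc2, hdom⟩ := p.2
    refine ⟨(Finset.orderEmbOfFin _ _).strictMono, (Finset.orderEmbOfFin _ _).strictMono,
      ?_, ?_, ?_⟩
    · intro i
      exact (Finset.mem_Icc.mp (hI1 (Finset.orderEmbOfFin_mem _ _ _))).1
    · intro i
      exact (Finset.mem_Icc.mp (hI2 (Finset.orderEmbOfFin_mem _ _ _))).2
    · intro i
      exact le_of_dom _ _ hdom i⟩
  left_inv x := by
    apply Subtype.ext
    apply Prod.ext
    · exact emb_image_univ l x.2.1
    · exact emb_image_univ l x.2.2.1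
  right_inv p := by
    apply Subtype.ext
    apply Prod.ext
    · exact image_emb_univ l p.2.2.2.1
    · exact image_emb_univ l p.2.2.2.2.1

end SP

/-! ### Transfer of the no-simple-root condition -/

lemma buildA_nosimple_iff (n l : ℕ) (x : Seq n l) :
    (∀ r ∈ buildA n l x, ¬ aSimple n r) ↔ ∀ i, x.1.1 i ≠ x.1.2 i := by
  constructor
  · intro h i
    have hmem : (⟨(x.1.1 i, x.1.2 i), ⟨x.2.2.2.1 i, x.2.2.2.2.2 i, x.2.2.2.2.1 i⟩⟩ : ARoot n)
        ∈ buildA n l x := mem_buildA.mpr ⟨i, rfl, rfl⟩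
    exact h _ hmem
  · intro h r hr hsimp
    rcases mem_buildA.mp hr with ⟨i, h1, h2⟩
    have : x.1.1 i = x.1.2 i := by rw [← h1, ← h2]; exact hsimp
    exact h i this

def nsEquiv (n l : ℕ) (hn : 1 ≤ n) :
    {x : Seq n l // ∀ i, x.1.1 i ≠ x.1.2 i} ≃ Seq (n-1) l where
  toFun x := ⟨(x.1.1.1, fun i => x.1.1.2 i - 1), by
    obtain ⟨⟨fg, hm1, hm2, h1, hn1, hle⟩, hne⟩ := x
    refine ⟨hm1, ?_, h1, ?_, ?_⟩
    · intro i j hij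
      have := hm2 hij
      have := h1 i
      have := hle i
      have := hne i
      simp only at *
      omega
    · intro i
      have := hn1 i
      simp only at *
      omega
    · intro i
      have := hle i
      have := hne i
      simp only at *
      omega⟩
  invFun z := ⟨⟨(z.1.1, fun i => z.1.2 i + 1), by
    obtain ⟨fg, hm1, hm2, h1, hn1, hle⟩ := z
    refine ⟨hm1, ?_, h1, ?_, ?_⟩
    · intro i j hij
      have := hm2 hij
      simp only at *
      omega
    · intro i
      have := hn1 i
      simp only at *
      omega
    · intro i
      have := hle i
      simp only at *
      omega⟩, by
    intro i
    have := z.2.2.2.2.2 i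
    simp only at *
    omega⟩
  left_inv x := by
    apply Subtype.ext
    apply Subtype.ext
    apply Prod.ext
    · rfl
    · funext i
      have h1 := x.1.2.2.2.1 i
      have hle := x.1.2.2.2.2.2 i
      have hne := x.2 i
      simp only at *
      omega
  right_inv z := by
    apply Subtype.ext
    apply Prod.ext
    · rfl
    · funext i
      simp only
      omega

/-! ### Transfer of the full-support condition -/

def QFS (n l : ℕ) (x : Seq n l) : Prop :=
  (∀ i : Fin l, ((i : ℕ) = 0 → x.1.1 i = 1) ∧ ((i : ℕ) = l - 1 → x.1.2 i = n)) ∧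
    ∀ i j : Fin l, (j : ℕ) = (i : ℕ) + 1 → x.1.1 j ≤ x.1.2 i + 1

lemma buildA_fullsupport_iff (n l : ℕ) (hl : 0 < l) (x : Seq n l) :
    aFullSupport n (buildA n l x) ↔ QFS n l x := by
  obtain ⟨⟨f, g⟩, hm1, hm2, h1, hn1, hle⟩ := x
  try simp only at hm1
  try simp only at hm2
  try simp only at h1
  try simp only at hn1
  try simp only at hle
  simp only [QFS]
  constructor
  · intro hfs
    have hn' : 1 ≤ n := le_trans (le_trans (h1 ⟨0, hl⟩) (hle ⟨0, hl⟩)) (hn1 ⟨0, hl⟩)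
    refine ⟨?_, ?_⟩
    · intro i
      constructor
      · intro hi0
        rcases hfs 1 le_rfl hn' with ⟨r, hr, hr1, hr2⟩
        rcases mem_buildA.mp hr with ⟨u, hu1, hu2⟩
        have hfu : f u = 1 := by have := h1 u; dsimp only at *; omega
        have hiu : i ≤ u := by
          rw [Fin.le_def, hi0]
          omega
        have := hm1.monotone hiu
        have := h1 i
        dsimp only at *
        omega
      · intro hil
        rcases hfs n hn' le_rfl with ⟨r, hr, hr1, hr2⟩
        rcases mem_buildA.mp hr with ⟨u, hu1, hu2⟩
        have hgu : g u = n := by have := hn1 u; dsimp only at *; omega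
        have hui : u ≤ i := by
          rw [Fin.le_def, hil]
          have := u.2
          omega
        have := hm2.monotone hui
        have := hn1 i
        dsimp only at *
        omega
    · intro i j hji
      by_contra hcon
      push_neg at hcon
      have hij : i < j := by rw [Fin.lt_def]; omega
      have hgn : g i + 1 ≤ n := by
        have := hm2 hij
        have := hn1 j
        omega
      rcases hfs (g i + 1) (by omega) hgn with ⟨r, hr, hr1, hr2⟩
      rcases mem_buildA.mp hr with ⟨u, hu1, hu2⟩
      rcases le_or_gt u i with hui | hui
      · have := hm2.monotone hui
        dsimp only at *
        omega
      · have hju : j ≤ u := by rw [Fin.le_def]; rw [Fin.lt_def] at hui; omega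
        have := hm1.monotone hju
        dsimp only at *
        omega
  · rintro ⟨hends, hgap⟩ p hp1 hpn
    set S := Finset.univ.filter (fun i : Fin l => f i ≤ p) with hS
    have hS0 : (⟨0, hl⟩ : Fin l) ∈ S := by
      apply Finset.mem_filter.mpr
      refine ⟨Finset.mem_univ _, ?_⟩
      rw [(hends ⟨0, hl⟩).1 rfl]
      exact hp1
    have hSne : S.Nonempty := ⟨_, hS0⟩
    set u := S.max' hSne with hu
    have huS : u ∈ S := S.max'_mem hSne
    have hfu : f u ≤ p := (Finset.mem_filter.mp huS).2
    have hgu : p ≤ g u := by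
      by_contra hcon
      push_neg at hcon
      rcases Nat.lt_or_ge (u : ℕ) (l - 1) with hul | hul
      · set j : Fin l := ⟨(u : ℕ) + 1, by omega⟩ with hj
        have hfj : f j ≤ g u + 1 := hgap u j rfl
        have hjS : j ∈ S := Finset.mem_filter.mpr ⟨Finset.mem_univ _, by omega⟩
        have hle' := S.le_max' j hjS
        rw [← hu] at hle'
        have hjv : (j : ℕ) = (u : ℕ) + 1 := rfl
        omega
      · have hueq : (u : ℕ) = l - 1 := by have := u.2; omega
        have := (hends u).2 hueq
        omega
    exact ⟨⟨(f u, g u), ⟨h1 u, hle u, hn1 u⟩⟩, mem_buildA.mpr ⟨u, rfl, rfl⟩, hfu, hgu⟩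

set_option maxHeartbeats 1000000 in
def fsEquiv (n m : ℕ) (hn : 1 ≤ n) (hm : 1 ≤ m) :
    {x : Seq n m // QFS n m x} ≃ Seq (n-1) (m-1) where
  toFun x := ⟨(fun i => x.1.1.1 ⟨(i : ℕ) + 1, Nat.add_lt_of_lt_sub i.2⟩ - 1,
               fun i => x.1.1.2 ⟨(i : ℕ), lt_of_lt_of_le i.2 (Nat.sub_le m 1)⟩), by
    obtain ⟨⟨⟨f, g⟩, hm1, hm2, h1, hn1, hle⟩, hends, hgap⟩ := x
    try simp only at hm1
    try simp only at hm2
    try simp only at h1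
    try simp only at hn1
    try simp only at hle
    try simp only at hends
    try simp only at hgap
    have hf2 : ∀ i : Fin (m-1), 2 ≤ f ⟨(i : ℕ) + 1, Nat.add_lt_of_lt_sub i.2⟩ := by
      intro i
      have h0 : f ⟨0, hm⟩ = 1 := (hends ⟨0, hm⟩).1 rfl
      have : f ⟨0, hm⟩ < f ⟨(i : ℕ) + 1, Nat.add_lt_of_lt_sub i.2⟩ :=
        hm1 (by rw [Fin.mk_lt_mk]; omega)
      omega
    refine ⟨?_, ?_, ?_, ?_, ?_⟩
    · intro i j hij
      dsimp only
      have := hm1 (show (⟨(i:ℕ)+1, Nat.add_lt_of_lt_sub i.2⟩ : Fin m) <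
        ⟨(j:ℕ)+1, Nat.add_lt_of_lt_sub j.2⟩ by rw [Fin.mk_lt_mk]; omega)
      have := hf2 i
      omega
    · intro i j hij
      dsimp only
      exact hm2 (by rw [Fin.mk_lt_mk]; omega)
    · intro i
      dsimp only
      have := hf2 i
      omega
    · intro i
      dsimp only
      have hgl : g ⟨(i:ℕ), lt_of_lt_of_le i.2 (Nat.sub_le m 1)⟩ < g ⟨m-1, Nat.sub_lt hm Nat.one_pos⟩ :=
        hm2 (by rw [Fin.mk_lt_mk]; have := i.2; omega)
      have := (hends ⟨m-1, Nat.sub_lt hm Nat.one_pos⟩).2 rfl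
      omega
    · intro i
      dsimp only
      have := hgap ⟨(i:ℕ), lt_of_lt_of_le i.2 (Nat.sub_le m 1)⟩ ⟨(i:ℕ)+1, Nat.add_lt_of_lt_sub i.2⟩ rfl
      omega⟩
  invFun z := ⟨⟨(fun t => if ht : (t : ℕ) = 0 then 1 else
        z.1.1 ⟨(t : ℕ) - 1, by omega⟩ + 1,
      fun t => if ht : (t : ℕ) = m - 1 then n else
        z.1.2 ⟨(t : ℕ), by have := t.2; omega⟩), by
    obtain ⟨⟨c, d⟩, mc, md, hc1, hdn, hcd⟩ := z
    try simp only at mc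
    try simp only at md
    try simp only at hc1
    try simp only at hdn
    try simp only at hcd
    have hd1 : ∀ i, 1 ≤ d i := fun i => le_trans (hc1 i) (hcd i)
    refine ⟨?_, ?_, ?_, ?_, ?_⟩
    · intro t t' htt'
      dsimp only
      rw [Fin.lt_def] at htt'
      by_cases h0 : (t : ℕ) = 0
      · rw [dif_pos h0, dif_neg (by omega)]
        have := hc1 ⟨(t' : ℕ) - 1, by have := t'.2; omega⟩
        omega
      · rw [dif_neg h0, dif_neg (by omega)]
        have := mc (show (⟨(t:ℕ)-1, by have := t.2; omega⟩ : Fin (m-1)) <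
          ⟨(t':ℕ)-1, by have := t'.2; omega⟩ by rw [Fin.mk_lt_mk]; omega)
        omega
    · intro t t' htt'
      dsimp only
      rw [Fin.lt_def] at htt'
      have ht : (t : ℕ) ≠ m - 1 := by have := t'.2; omega
      rw [dif_neg ht]
      by_cases h' : (t' : ℕ) = m - 1
      · rw [dif_pos h']
        have := hdn ⟨(t : ℕ), by omega⟩
        omega
      · rw [dif_neg h']
        exact md (by rw [Fin.mk_lt_mk]; omega)
    · intro t
      dsimp only
      by_cases h0 : (t : ℕ) = 0
      · rw [dif_pos h0]
      · rw [dif_neg h0]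
        omega
    · intro t
      dsimp only
      by_cases h' : (t : ℕ) = m - 1
      · rw [dif_pos h']
      · rw [dif_neg h']
        have := hdn ⟨(t : ℕ), by have := t.2; omega⟩
        omega
    · intro t
      dsimp only
      by_cases h0 : (t : ℕ) = 0
      · rw [dif_pos h0]
        by_cases h' : (t : ℕ) = m - 1
        · rw [dif_pos h']
          exact hn
        · rw [dif_neg h']
          exact hd1 _
      · rw [dif_neg h0]
        by_cases h' : (t : ℕ) = m - 1
        · rw [dif_pos h']
          have := hcd ⟨(t : ℕ) - 1, by omega⟩
          have := hdn ⟨(t : ℕ) - 1, by omega⟩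
          omega
        · rw [dif_neg h']
          have h1 := hcd ⟨(t : ℕ) - 1, by omega⟩
          have h2 := md (show (⟨(t:ℕ)-1, by have := t.2; omega⟩ : Fin (m-1)) <
            ⟨(t:ℕ), by have := t.2; omega⟩ by rw [Fin.mk_lt_mk]; omega)
          omega⟩, by
    obtain ⟨⟨c, d⟩, mc, md, hc1, hdn, hcd⟩ := z
    try simp only at mc
    try simp only at md
    try simp only at hc1
    try simp only at hdn
    try simp only at hcd
    constructor
    · intro i
      dsimp only
      constructor
      · intro hi0
        rw [dif_pos hi0]
      · intro hil
        rw [dif_pos hil]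
    · intro i j hji
      dsimp only
      have hj0 : (j : ℕ) ≠ 0 := by omega
      have hil : (i : ℕ) ≠ m - 1 := by have := j.2; omega
      rw [dif_neg hj0, dif_neg hil]
      have hidx : (⟨(j : ℕ) - 1, by have := j.2; omega⟩ : Fin (m-1)) =
          ⟨(i : ℕ), by have := j.2; omega⟩ := by
        apply Fin.ext
        dsimp only
        omega
      rw [hidx]
      have := hcd ⟨(i : ℕ), by have := j.2; omega⟩
      omega⟩
  left_inv x := by
    obtain ⟨⟨⟨f, g⟩, hm1, hm2, h1, hn1, hle⟩, hends, hgap⟩ := x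
    try simp only at hm1
    try simp only at hm2
    try simp only at h1
    try simp only at hn1
    try simp only at hle
    try simp only at hends
    try simp only at hgap
    apply Subtype.ext
    apply Subtype.ext
    apply Prod.ext
    · funext t
      dsimp only
      by_cases h0 : (t : ℕ) = 0
      · rw [dif_pos h0]
        exact ((hends t).1 h0).symm
      · rw [dif_neg h0]
        have hidx : (⟨(t : ℕ) - 1 + 1, by have := t.2; omega⟩ : Fin m) = t := by
          apply Fin.ext
          dsimp only
          omega
        rw [hidx]
        have h2 : f ⟨0, hm⟩ = 1 := (hends ⟨0, hm⟩).1 rfl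
        have : f ⟨0, hm⟩ ≤ f t := hm1.monotone (by rw [Fin.le_def, Fin.val_mk]; omega)
        omega
    · funext t
      dsimp only
      by_cases h' : (t : ℕ) = m - 1
      · rw [dif_pos h']
        exact ((hends t).2 h').symm
      · rw [dif_neg h']
  right_inv z := by
    obtain ⟨⟨c, d⟩, mc, md, hc1, hdn, hcd⟩ := z
    try simp only at mc
    try simp only at md
    try simp only at hc1
    try simp only at hdn
    try simp only at hcd
    apply Subtype.ext
    apply Prod.ext
    · funext i
      dsimp only
      rw [dif_neg (show ¬((⟨(i : ℕ) + 1, Nat.add_lt_of_lt_sub i.2⟩ : Fin m) : ℕ) = 0 by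
        rw [Fin.val_mk]; omega)]
      have hidx : (⟨((⟨(i : ℕ) + 1, Nat.add_lt_of_lt_sub i.2⟩ : Fin m) : ℕ) - 1,
          by have := i.2; omega⟩ : Fin (m-1)) = i := by
        apply Fin.ext
        dsimp only
        omega
      rw [hidx]
      omega
    · funext i
      dsimp only
      rw [dif_neg (show ¬((⟨(i : ℕ), lt_of_lt_of_le i.2 (Nat.sub_le m 1)⟩ : Fin m) : ℕ) = m - 1 by
        rw [Fin.val_mk]; have := i.2; omega)]

end AntiAux

/-- The number of `k`-element antichains in the root poset of type Aₙ containing no simple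
root equals the number of `(n-k)`-element antichains with full support. -/
theorem antichains_no_simple_eq_full_support (n k : ℕ) (hn : 1 ≤ n) (hk : k ≤ n) :
    Nat.card {A : Finset (ARoot n) // IsAntichain (aLe n) (A : Set (ARoot n)) ∧
        A.card = k ∧ ∀ x ∈ A, ¬ aSimple n x} =
      Nat.card {A : Finset (ARoot n) // IsAntichain (aLe n) (A : Set (ARoot n)) ∧
        A.card = n - k ∧ aFullSupport n A} := by
  by_cases hkn : k = n
  · have h1 : IsEmpty {A : Finset (ARoot n) // IsAntichain (aLe n) (A : Set (ARoot n)) ∧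
        A.card = k ∧ ∀ x ∈ A, ¬ aSimple n x} := by
      constructor
      rintro ⟨A, hA, hc, hns⟩
      have himg : (A.image (fun r : ARoot n => r.1.1)).card = k :=
        AntiAux.card_image_left hA hc
      have hsub : A.image (fun r : ARoot n => r.1.1) ⊆ Finset.Icc 1 (n-1) := by
        intro z hz
        rcases Finset.mem_image.mp hz with ⟨r, hr, rfl⟩
        have h1r := r.2.1
        have h2r := r.2.2.1
        have h3r := r.2.2.2
        have hnsr : ¬ (r.1.1 = r.1.2) := hns r hr
        exact Finset.mem_Icc.mpr ⟨h1r, by omega⟩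
      have hcard := Finset.card_le_card hsub
      rw [himg, AntiAux.card_I] at hcard
      omega
    have h2 : IsEmpty {A : Finset (ARoot n) // IsAntichain (aLe n) (A : Set (ARoot n)) ∧
        A.card = n - k ∧ aFullSupport n A} := by
      constructor
      rintro ⟨A, hA, hc, hfs⟩
      have hAe : A = ∅ := Finset.card_eq_zero.mp (by omega)
      rcases hfs 1 le_rfl hn with ⟨x, hx, _⟩
      rw [hAe] at hx
      exact absurd hx (Finset.notMem_empty x)
    rw [@Nat.card_of_isEmpty _ h1, @Nat.card_of_isEmpty _ h2]
  · have hk' : k ≤ n - 1 := by omega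
    have hm1 : 1 ≤ n - k := by omega
    have hl0 : 0 < n - k := hm1
    have hmk : n - 1 - k = n - k - 1 := by omega
    have e1 := AntiAux.antiEquivP n k (fun A => ∀ x ∈ A, ¬ aSimple n x)
      (fun x => ∀ i, x.1.1 i ≠ x.1.2 i) (AntiAux.buildA_nosimple_iff n k)
    have e2 := AntiAux.nsEquiv n k hn
    have e3 := AntiAux.seqPairEquiv n k
    have e4 := AntiAux.complEquiv n k hk'
    have e5 := (AntiAux.seqPairEquiv n (n - k - 1)).symm
    have e6 := (AntiAux.fsEquiv n (n - k) hn hm1).symm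
    have e7 := (AntiAux.antiEquivP n (n - k) (aFullSupport n) (AntiAux.QFS n (n - k))
      (fun x => AntiAux.buildA_fullsupport_iff n (n - k) hl0 x)).symm
    calc Nat.card {A : Finset (ARoot n) // IsAntichain (aLe n) (A : Set (ARoot n)) ∧
          A.card = k ∧ ∀ x ∈ A, ¬ aSimple n x}
        = Nat.card (AntiAux.PairT n k) := Nat.card_congr ((e1.trans e2).trans e3)
      _ = Nat.card (AntiAux.PairT n (n - 1 - k)) := Nat.card_congr e4
      _ = Nat.card (AntiAux.PairT n (n - k - 1)) := by rw [hmk]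
      _ = Nat.card {x : AntiAux.Seq n (n - k) // AntiAux.QFS n (n - k) x} :=
          Nat.card_congr (e5.trans e6)
      _ = Nat.card {A : Finset (ARoot n) // IsAntichain (aLe n) (A : Set (ARoot n)) ∧
          A.card = n - k ∧ aFullSupport n A} := Nat.card_congr e7
end
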